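/- arXiv:2506.16930 — 9 statements merged into one kernel-verified Lean document; each statement's English description precedes it below -/
import Mathlib

section
/- For every function f : [0,1] → ℝ, one has (1/2)·‖f‖_w ≤ V(f) ≤ ‖f‖_s, i.e. the weak average smoothness is at most twice the total variation, and the total variation is at most the strong average smoothness. -/
open MeasureTheory Set ENNReal

/-- The local slope of `f` at `x`: `Λ_f(x) = sup_{x' ∈ [0,1], x' ≠ x} |f(x) − f(x')|/|x − x'|`,
valued in `[0,∞]`. -/
noncomputable def locSlope (f : ℝ → ℝ) (x : ℝ) : ℝ≥0∞ :=
  ⨆ (x' : ℝ) (_ : x' ∈ Set.Icc (0:ℝ) 1) (_ : x' ≠ x),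
    ENNReal.ofReal (|f x - f x'| / |x - x'|)

/-- Strong average smoothness: `‖f‖_s = ∫_{[0,1]} Λ_f(x) dx`. -/
noncomputable def strongNorm (f : ℝ → ℝ) : ℝ≥0∞ :=
  ∫⁻ x in Set.Icc (0:ℝ) 1, locSlope f x

/-- Weak average smoothness: `‖f‖_w = sup_{t>0} t·λ({x ∈ [0,1] : Λ_f(x) ≥ t})`. -/
noncomputable def weakNorm (f : ℝ → ℝ) : ℝ≥0∞ :=
  ⨆ (t : ℝ) (_ : 0 < t),
    ENNReal.ofReal t * volume {x ∈ Set.Icc (0:ℝ) 1 | ENNReal.ofReal t ≤ locSlope f x}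

/-- Total variation of `f` on `[0,1]`. -/
noncomputable def totalVar (f : ℝ → ℝ) : ℝ≥0∞ := eVariationOn f (Set.Icc 0 1)

lemma slope_le_locSlope (f : ℝ → ℝ) {x a : ℝ} (ha : a ∈ Set.Icc (0:ℝ) 1) (hne : a ≠ x) :
    ENNReal.ofReal (|f x - f a| / |x - a|) ≤ locSlope f x := by
  unfold locSlope
  exact le_iSup_of_le a (le_iSup_of_le ha (le_iSup_of_le hne le_rfl))

lemma ofReal_abs_le_mul (f : ℝ → ℝ) {x a : ℝ} (ha : a ∈ Set.Icc (0:ℝ) 1) (hax : a ≠ x) :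
    ENNReal.ofReal |f x - f a| ≤ locSlope f x * ENNReal.ofReal |x - a| := by
  have h1 : ENNReal.ofReal (|f x - f a| / |x - a|) * ENNReal.ofReal |x - a|
      = ENNReal.ofReal |f x - f a| := by
    rw [← ENNReal.ofReal_mul (by positivity)]
    rw [div_mul_cancel₀]
    exact abs_ne_zero.2 (sub_ne_zero.2 (fun h => hax h.symm))
  calc ENNReal.ofReal |f x - f a|
      = ENNReal.ofReal (|f x - f a| / |x - a|) * ENNReal.ofReal |x - a| := h1.symm
    _ ≤ locSlope f x * ENNReal.ofReal |x - a| :=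
        mul_le_mul_left (slope_le_locSlope f ha hax) _

lemma edist_le_lintegral_Ioo (f : ℝ → ℝ) {a b : ℝ} (ha : a ∈ Set.Icc (0:ℝ) 1)
    (hb : b ∈ Set.Icc (0:ℝ) 1) (hab : a < b) :
    ENNReal.ofReal |f b - f a| ≤ ∫⁻ x in Set.Ioo a b, locSlope f x := by
  set c : ℝ≥0∞ := ENNReal.ofReal |f b - f a| / ENNReal.ofReal (b - a) with hc
  have hba0 : ENNReal.ofReal (b - a) ≠ 0 := by
    simpa using sub_pos.2 hab
  have hbat : ENNReal.ofReal (b - a) ≠ ⊤ := ENNReal.ofReal_ne_top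
  have key : ∀ x ∈ Set.Ioo a b, c ≤ locSlope f x := by
    intro x hx
    rw [hc, ENNReal.div_le_iff_le_mul (Or.inl hba0) (Or.inl hbat)]
    have h1 : ENNReal.ofReal |f x - f a| ≤ locSlope f x * ENNReal.ofReal (x - a) := by
      have := ofReal_abs_le_mul f ha (ne_of_lt hx.1)
      rwa [abs_of_pos (sub_pos.2 hx.1)] at this
    have h2 : ENNReal.ofReal |f x - f b| ≤ locSlope f x * ENNReal.ofReal (b - x) := by
      have := ofReal_abs_le_mul f hb (ne_of_gt hx.2)
      rwa [abs_sub_comm x b, abs_of_pos (sub_pos.2 hx.2)] at this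
    calc ENNReal.ofReal |f b - f a|
        ≤ ENNReal.ofReal (|f x - f a| + |f x - f b|) := by
          apply ENNReal.ofReal_le_ofReal
          have := abs_sub_abs_le_abs_sub (f b - f a) (0:ℝ)
          calc |f b - f a| ≤ |f x - f a| + |f b - f x| := by
                have := abs_sub_le (f b) (f x) (f a)
                calc |f b - f a| ≤ |f b - f x| + |f x - f a| := this
                  _ = |f x - f a| + |f b - f x| := by ring
            _ = |f x - f a| + |f x - f b| := by rw [abs_sub_comm (f b) (f x)]
      _ = ENNReal.ofReal |f x - f a| + ENNReal.ofReal |f x - f b| :=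
          ENNReal.ofReal_add (abs_nonneg _) (abs_nonneg _)
      _ ≤ locSlope f x * ENNReal.ofReal (x - a) + locSlope f x * ENNReal.ofReal (b - x) :=
          add_le_add h1 h2
      _ = locSlope f x * (ENNReal.ofReal (x - a) + ENNReal.ofReal (b - x)) := by
          rw [mul_add]
      _ = locSlope f x * ENNReal.ofReal (b - a) := by
          rw [← ENNReal.ofReal_add (by linarith [hx.1]) (by linarith [hx.2])]
          ring_nf
  calc ENNReal.ofReal |f b - f a|
      = c * ENNReal.ofReal (b - a) := (ENNReal.div_mul_cancel hba0 hbat).symm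
    _ = c * volume (Set.Ioo a b) := by rw [Real.volume_Ioo]
    _ = ∫⁻ _ in Set.Ioo a b, c := (setLIntegral_const _ _).symm
    _ ≤ ∫⁻ x in Set.Ioo a b, locSlope f x := setLIntegral_mono' measurableSet_Ioo key
lemma evar_Icc_add (f : ℝ → ℝ) {a b c : ℝ} (hab : a ≤ b) (hbc : b ≤ c) :
    eVariationOn f (Set.Icc a b) + eVariationOn f (Set.Icc b c) = eVariationOn f (Set.Icc a c) := by
  have := eVariationOn.Icc_add_Icc f (s := Set.univ) hab hbc (Set.mem_univ b)
  simpa using this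


lemma lemB (f : ℝ → ℝ) (t : ℝ) (ht : 0 ≤ t) (P Q : ℕ → ℝ) :
    ∀ n : ℕ, ∀ s : Finset ℕ, s.card ≤ n → ∀ e₁ e₂ : ℝ, e₁ ≤ e₂ →
    (∀ i ∈ s, P i < Q i ∧ Q i ≤ 1 ∧
      ENNReal.ofReal (t * (Q i - P i)) ≤ eVariationOn f (Set.Icc (P i) (Q i))) →
    (∀ i ∈ s, e₁ ≤ P i ∨ Q i ≤ e₂) →
    ENNReal.ofReal t * volume ((⋃ i ∈ s, Set.Ioo (P i) (Q i)) \ Set.Iic e₂)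
      ≤ eVariationOn f (Set.Icc e₁ 1) + eVariationOn f (Set.Icc e₂ 1) := by
  intro n
  induction n with
  | zero =>
    intro s hcard e₁ e₂ _ _ _
    rw [Finset.card_eq_zero.1 (Nat.le_zero.1 hcard)]
    simp
  | succ n IH =>
    intro s hcard e₁ e₂ h12 hval hinv
    classical
    set D := s.filter (fun i => e₂ < Q i) with hD
    by_cases hDne : D.Nonempty
    · -- pick i₀ minimizing P over D
      obtain ⟨i₀, hi₀D, hi₀min⟩ := D.exists_min_image P hDne
      set m' := max e₂ (P i₀) with hm'
      have he₂m' : e₂ ≤ m' := le_max_left _ _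
      -- candidates
      set C := D.filter (fun i => P i ≤ m') with hCdef
      have hi₀C : i₀ ∈ C := by
        rw [hCdef, Finset.mem_filter]
        exact ⟨hi₀D, le_max_right _ _⟩
      obtain ⟨J, hJC, hJmax⟩ := C.exists_max_image Q ⟨i₀, hi₀C⟩
      have hJD : J ∈ D := (Finset.mem_filter.1 hJC).1
      have hJs : J ∈ s := (Finset.mem_filter.1 hJD).1
      have hJQ : e₂ < Q J := by
        have := (Finset.mem_filter.1 hJD).2
        simpa using this
      have hJP : P J ≤ m' := by
        have := (Finset.mem_filter.1 hJC).2
        simpa using this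
      obtain ⟨hPQJ, hQJ1, hslopeJ⟩ := hval J hJs
      have he₁PJ : e₁ ≤ P J := by
        rcases hinv J hJs with h | h
        · exact h
        · exact absurd hJQ (not_lt.2 h)
      have hm'QJ : m' < Q J := by
        rw [hm']
        apply max_lt hJQ
        exact lt_of_le_of_lt (hi₀min J hJD) hPQJ
      -- coverage
      have hcov : (⋃ i ∈ s, Set.Ioo (P i) (Q i)) \ Set.Iic e₂ ⊆
          Set.Ioc m' (Q J) ∪ ((⋃ i ∈ s.erase J, Set.Ioo (P i) (Q i)) \ Set.Iic (Q J)) := by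
        rintro z ⟨hzU, hze₂⟩
        simp only [Set.mem_iUnion, Set.mem_Ioo] at hzU
        obtain ⟨i, his, hzi⟩ := hzU
        simp only [Set.mem_Iic, not_le] at hze₂
        have hiD : i ∈ D := by
          rw [hD, Finset.mem_filter]
          refine ⟨his, ?_⟩
          exact lt_trans hze₂ hzi.2
        by_cases hzQJ : z ≤ Q J
        · left
          refine ⟨?_, hzQJ⟩
          rw [hm']
          apply max_lt hze₂
          exact lt_of_le_of_lt (hi₀min i hiD) hzi.1
        · right
          push_neg at hzQJ
          have hiJ : i ≠ J := by
            intro h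
            rw [h] at hzi
            exact absurd hzi.2 (not_lt.2 hzQJ.le)
          refine ⟨?_, by simpa using hzQJ.not_ge⟩
          simp only [Set.mem_iUnion, Set.mem_Ioo]
          exact ⟨i, Finset.mem_erase.2 ⟨hiJ, his⟩, hzi⟩
      -- apply IH
      have hcard' : (s.erase J).card ≤ n := by
        have := Finset.card_erase_of_mem hJs
        omega
      have hIH := IH (s.erase J) hcard' m' (Q J) hm'QJ.le
        (fun i hi => hval i (Finset.mem_of_mem_erase hi))
        (by
          intro i hi
          have his := Finset.mem_of_mem_erase hi
          by_cases hPi : P i ≤ m'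
          · right
            by_cases hQi : e₂ < Q i
            · have hiC : i ∈ C := by
                rw [hCdef, Finset.mem_filter, hD, Finset.mem_filter]
                exact ⟨⟨his, by simpa using hQi⟩, by simpa using hPi⟩
              exact hJmax i hiC
            · push_neg at hQi
              exact hQi.trans hJQ.le
          · left; linarith)
      calc ENNReal.ofReal t * volume ((⋃ i ∈ s, Set.Ioo (P i) (Q i)) \ Set.Iic e₂)
          ≤ ENNReal.ofReal t * (volume (Set.Ioc m' (Q J)) +
              volume ((⋃ i ∈ s.erase J, Set.Ioo (P i) (Q i)) \ Set.Iic (Q J))) := by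
            apply mul_le_mul_right
            exact (measure_mono hcov).trans (measure_union_le _ _)
        _ = ENNReal.ofReal (t * (Q J - m')) +
              ENNReal.ofReal t * volume ((⋃ i ∈ s.erase J, Set.Ioo (P i) (Q i)) \ Set.Iic (Q J)) := by
            rw [mul_add, Real.volume_Ioc, ← ENNReal.ofReal_mul ht]
        _ ≤ ENNReal.ofReal (t * (Q J - P J)) +
              (eVariationOn f (Set.Icc m' 1) + eVariationOn f (Set.Icc (Q J) 1)) := by
            apply add_le_add _ hIH
            apply ENNReal.ofReal_le_ofReal
            apply mul_le_mul_of_nonneg_left _ ht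
            linarith
        _ ≤ (eVariationOn f (Set.Icc (P J) (Q J)) + eVariationOn f (Set.Icc (Q J) 1))
              + eVariationOn f (Set.Icc m' 1) := by
            calc ENNReal.ofReal (t * (Q J - P J)) +
                  (eVariationOn f (Set.Icc m' 1) + eVariationOn f (Set.Icc (Q J) 1))
                ≤ eVariationOn f (Set.Icc (P J) (Q J)) +
                  (eVariationOn f (Set.Icc m' 1) + eVariationOn f (Set.Icc (Q J) 1)) :=
                  add_le_add_left hslopeJ _
              _ = _ := by ring
        _ = eVariationOn f (Set.Icc (P J) 1) + eVariationOn f (Set.Icc m' 1) := by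
            rw [evar_Icc_add f hPQJ.le hQJ1]
        _ ≤ eVariationOn f (Set.Icc e₁ 1) + eVariationOn f (Set.Icc e₂ 1) := by
            apply add_le_add
            · exact eVariationOn.mono f (Set.Icc_subset_Icc_left he₁PJ)
            · exact eVariationOn.mono f (Set.Icc_subset_Icc_left he₂m')
    · -- no interval sticks out beyond e₂
      have : (⋃ i ∈ s, Set.Ioo (P i) (Q i)) \ Set.Iic e₂ = ∅ := by
        apply Set.eq_empty_of_forall_notMem
        rintro z ⟨hzU, hze₂⟩
        simp only [Set.mem_iUnion, Set.mem_Ioo] at hzU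
        obtain ⟨i, his, hzi⟩ := hzU
        simp only [Set.mem_Iic, not_le] at hze₂
        apply hDne
        exact ⟨i, by rw [hD, Finset.mem_filter]; exact ⟨his, by linarith [hzi.1, hzi.2]⟩⟩
      rw [this]
      simp

lemma var_le_strong (f : ℝ → ℝ) : totalVar f ≤ strongNorm f := by
  unfold totalVar eVariationOn
  apply iSup_le
  rintro ⟨n, u, hu, hus⟩
  calc ∑ i ∈ Finset.range n, edist (f (u (i + 1))) (f (u i))
      ≤ ∑ i ∈ Finset.range n, ∫⁻ x in Set.Ioo (u i) (u (i+1)), locSlope f x := by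
        apply Finset.sum_le_sum
        intro i _
        rcases eq_or_lt_of_le (hu (Nat.le_succ i)) with h | h
        · simp [← h]
        · rw [edist_dist, Real.dist_eq]
          exact edist_le_lintegral_Ioo f (hus i) (hus (i+1)) h
    _ = ∫⁻ x in ⋃ i ∈ Finset.range n, Set.Ioo (u i) (u (i+1)), locSlope f x := by
        rw [lintegral_biUnion_finset ?_ (fun _ _ => measurableSet_Ioo)]
        have hd : ∀ i j, i < j → Disjoint (Set.Ioo (u i) (u (i+1))) (Set.Ioo (u j) (u (j+1))) := by
          intro i j h
          rw [Set.disjoint_left]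
          intro x hx hx2
          have : u (i+1) ≤ u j := hu h
          have := hx.2
          have := hx2.1
          linarith
        intro i _ j _ hij
        rcases lt_or_gt_of_ne hij with h | h
        · exact hd i j h
        · exact (hd j i h).symm
    _ ≤ strongNorm f := by
        apply lintegral_mono_set
        intro x hx
        simp only [Set.mem_iUnion] at hx
        obtain ⟨i, _, hx⟩ := hx
        exact ⟨(hus i).1.trans (le_of_lt hx.1), (le_of_lt hx.2).trans (hus (i+1)).2⟩

lemma weak_core (f : ℝ → ℝ) {t t' : ℝ} (ht' : 0 < t') (htt : t' < t) :
    ENNReal.ofReal t' * volume {x ∈ Set.Icc (0:ℝ) 1 | ENNReal.ofReal t ≤ locSlope f x}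
      ≤ totalVar f + totalVar f := by
  classical
  set E := {x ∈ Set.Icc (0:ℝ) 1 | ENNReal.ofReal t ≤ locSlope f x} with hE
  have hwit : ∀ x ∈ E, ∃ y, y ∈ Set.Icc (0:ℝ) 1 ∧ y ≠ x ∧ t' * |x - y| < |f x - f y| := by
    intro x hx
    have hx2 : ENNReal.ofReal t' < locSlope f x := by
      refine lt_of_lt_of_le ?_ hx.2
      exact (ENNReal.ofReal_lt_ofReal_iff_of_nonneg ht'.le).2 htt
    simp only [locSlope, lt_iSup_iff] at hx2
    obtain ⟨x', hmem, hne, hlt⟩ := hx2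
    refine ⟨x', hmem, hne, ?_⟩
    have h1 : t' < |f x - f x'| / |x - x'| :=
      (ENNReal.ofReal_lt_ofReal_iff_of_nonneg ht'.le).1 hlt
    have h2 : 0 < |x - x'| := abs_pos.2 (sub_ne_zero.2 (fun h => hne h.symm))
    rw [lt_div_iff₀ h2] at h1
    linarith
  choose! y hy1 hy2 hy3 using hwit
  set P : ℝ → ℝ := fun x => min x (y x) with hP
  set Q : ℝ → ℝ := fun x => max x (y x) with hQ
  have hprops : ∀ x ∈ E, 0 ≤ P x ∧ P x < Q x ∧ Q x ≤ 1 ∧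
      ENNReal.ofReal (t' * (Q x - P x)) ≤ eVariationOn f (Set.Icc (P x) (Q x)) := by
    intro x hx
    have hx01 : x ∈ Set.Icc (0:ℝ) 1 := hx.1
    have hy01 := hy1 x hx
    have hne := hy2 x hx
    have hPQ : P x < Q x := min_lt_max.2 (fun h => hne h.symm)
    refine ⟨le_min hx01.1 hy01.1, hPQ, max_le hx01.2 hy01.2, ?_⟩
    have habs : Q x - P x = |x - y x| := by
      rw [abs_sub_comm]; exact max_sub_min_eq_abs x (y x)
    calc ENNReal.ofReal (t' * (Q x - P x)) ≤ ENNReal.ofReal |f x - f (y x)| := by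
          apply ENNReal.ofReal_le_ofReal
          rw [habs]
          exact (hy3 x hx).le
      _ = edist (f x) (f (y x)) := by rw [edist_dist, Real.dist_eq]
      _ ≤ eVariationOn f (Set.Icc (P x) (Q x)) := by
          apply eVariationOn.edist_le f
          · exact ⟨min_le_left _ _, le_max_left _ _⟩
          · exact ⟨min_le_right _ _, le_max_right _ _⟩
  set sfun : ℝ → Set ℝ := fun x => if x ∈ E then Set.Ioo (P x) (Q x) else ∅ with hsfun
  set U := ⋃ x, sfun x with hU
  -- E \ U is countable
  have hsub : ∀ x ∈ E, Set.Ioo (P x) (Q x) ⊆ U := by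
    intro x hx
    intro z hz
    exact Set.mem_iUnion.2 ⟨x, by simp [hsfun, hx, hz]⟩
  have hcEU : (E \ U).Countable := by
    have hA : {z ∈ E \ U | z = P z}.Countable := by
      apply Set.Countable.mono ?_ (Set.countable_iUnion
        (fun q : ℚ => ?_) : (⋃ q : ℚ, {z ∈ E \ U | z = P z ∧ z < q ∧ (q:ℝ) < Q z}).Countable)
      · rintro z ⟨⟨hzE, hzU⟩, hzP⟩
        have hzQ : z < Q z := by
          have := (hprops z hzE).2.1
          rw [← hzP] at this; exact this
        obtain ⟨q, hq1, hq2⟩ := exists_rat_btwn hzQ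
        exact Set.mem_iUnion.2 ⟨q, ⟨⟨hzE, hzU⟩, hzP, hq1, hq2⟩⟩
      · apply Set.Subsingleton.countable
        rintro z₁ ⟨⟨hz₁E, hz₁U⟩, hz₁P, hz₁q, hz₁Q⟩ z₂ ⟨⟨hz₂E, hz₂U⟩, hz₂P, hz₂q, hz₂Q⟩
        by_contra hne
        rcases lt_or_gt_of_ne hne with h | h
        · exact hz₂U (hsub z₁ hz₁E ⟨lt_of_le_of_lt (min_le_left z₁ (y z₁)) h, lt_trans hz₂q hz₁Q⟩)
        · exact hz₁U (hsub z₂ hz₂E ⟨lt_of_le_of_lt (min_le_left z₂ (y z₂)) h, lt_trans hz₁q hz₂Q⟩)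
    have hB : {z ∈ E \ U | z = Q z}.Countable := by
      apply Set.Countable.mono ?_ (Set.countable_iUnion
        (fun q : ℚ => ?_) : (⋃ q : ℚ, {z ∈ E \ U | z = Q z ∧ P z < q ∧ (q:ℝ) < z}).Countable)
      · rintro z ⟨⟨hzE, hzU⟩, hzQ⟩
        have hzP : P z < z := by
          have := (hprops z hzE).2.1
          rw [← hzQ] at this; exact this
        obtain ⟨q, hq1, hq2⟩ := exists_rat_btwn hzP
        exact Set.mem_iUnion.2 ⟨q, ⟨⟨hzE, hzU⟩, hzQ, hq1, hq2⟩⟩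
      · apply Set.Subsingleton.countable
        rintro z₁ ⟨⟨hz₁E, hz₁U⟩, hz₁Q, hz₁q, hz₁z⟩ z₂ ⟨⟨hz₂E, hz₂U⟩, hz₂Q, hz₂q, hz₂z⟩
        by_contra hne
        rcases lt_or_gt_of_ne hne with h | h
        · exact hz₁U (hsub z₂ hz₂E ⟨lt_trans hz₂q hz₁z, lt_of_lt_of_le h (le_max_left z₂ (y z₂))⟩)
        · exact hz₂U (hsub z₁ hz₁E ⟨lt_trans hz₁q hz₂z, lt_of_lt_of_le h (le_max_left z₁ (y z₁))⟩)
    apply Set.Countable.mono ?_ (hA.union hB)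
    rintro z ⟨hzE, hzU⟩
    rcases le_total z (y z) with h | h
    · exact Or.inl ⟨⟨hzE, hzU⟩, (min_eq_left h).symm⟩
    · exact Or.inr ⟨⟨hzE, hzU⟩, (max_eq_left h).symm⟩
  -- volume E ≤ volume U
  have hvolEU : volume E ≤ volume U := by
    calc volume E ≤ volume (U ∪ (E \ U)) := measure_mono (fun z hz => by
          by_cases h : z ∈ U
          · exact Or.inl h
          · exact Or.inr ⟨hz, h⟩)
      _ ≤ volume U + volume (E \ U) := measure_union_le _ _
      _ = volume U := by rw [hcEU.measure_zero, add_zero]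
  -- Lindelöf
  obtain ⟨T, hTc, hTU⟩ := TopologicalSpace.isOpen_iUnion_countable sfun (fun x => by
    by_cases h : x ∈ E
    · simp only [hsfun, if_pos h]; exact isOpen_Ioo
    · simp only [hsfun, if_neg h]; exact isOpen_empty)
  have hvolU : ENNReal.ofReal t' * volume U ≤ totalVar f + totalVar f := by
    rcases T.eq_empty_or_nonempty with hTe | hTne
    · have : U = ∅ := by
        rw [hU, ← hTU, hTe]; simp
      rw [this]; simp
    · obtain ⟨g, hg⟩ := Set.Countable.exists_eq_range hTc hTne
      have hUeq : U = ⋃ n : ℕ, sfun (g n) := by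
        rw [hU, ← hTU, hg, Set.biUnion_range]
      set W : ℕ → Set ℝ := fun N => ⋃ n ∈ (Finset.range N).filter (fun n => g n ∈ E),
        Set.Ioo (P (g n)) (Q (g n)) with hW
      have hWmono : Monotone W := by
        intro N M hNM z hz
        obtain ⟨n, hn, hzn⟩ := Set.mem_iUnion₂.1 hz
        have hn' := Finset.mem_filter.1 hn
        exact Set.mem_iUnion₂.2 ⟨n, Finset.mem_filter.2
          ⟨Finset.mem_range.2 (lt_of_lt_of_le (Finset.mem_range.1 hn'.1) hNM), hn'.2⟩, hzn⟩
      have hUWeq : U = ⋃ N, W N := by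
        rw [hUeq]
        apply Set.Subset.antisymm
        · intro z hz
          obtain ⟨n, hn⟩ := Set.mem_iUnion.1 hz
          by_cases h : g n ∈ E
          · rw [hsfun] at hn
            simp only [if_pos h] at hn
            exact Set.mem_iUnion.2 ⟨n + 1, Set.mem_iUnion₂.2
              ⟨n, Finset.mem_filter.2 ⟨Finset.mem_range.2 (Nat.lt_succ_self n), h⟩, hn⟩⟩
          · rw [hsfun] at hn; simp [if_neg h] at hn
        · intro z hz
          obtain ⟨N, hN⟩ := Set.mem_iUnion.1 hz
          obtain ⟨n, hn, hzn⟩ := Set.mem_iUnion₂.1 hN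
          have h : g n ∈ E := (Finset.mem_filter.1 hn).2
          exact Set.mem_iUnion.2 ⟨n, by rw [hsfun]; simp only [if_pos h]; exact hzn⟩
      have hWbound : ∀ N, ENNReal.ofReal t' * volume (W N) ≤ totalVar f + totalVar f := by
        intro N
        set S := (Finset.range N).filter (fun n => g n ∈ E) with hS
        have hval : ∀ n ∈ S, (P ∘ g) n < (Q ∘ g) n ∧ (Q ∘ g) n ≤ 1 ∧
            ENNReal.ofReal (t' * ((Q ∘ g) n - (P ∘ g) n)) ≤
              eVariationOn f (Set.Icc ((P ∘ g) n) ((Q ∘ g) n)) := by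
          intro n hn
          have h := hprops (g n) (Finset.mem_filter.1 hn).2
          exact ⟨h.2.1, h.2.2.1, h.2.2.2⟩
        have hinv : ∀ n ∈ S, (0:ℝ) ≤ (P ∘ g) n ∨ (Q ∘ g) n ≤ 0 := by
          intro n hn
          exact Or.inl (hprops (g n) (Finset.mem_filter.1 hn).2).1
        have := lemB f t' ht'.le (P ∘ g) (Q ∘ g) S.card S le_rfl 0 0 le_rfl hval hinv
        have hWdiff : (⋃ i ∈ S, Set.Ioo ((P ∘ g) i) ((Q ∘ g) i)) \ Set.Iic (0:ℝ) = W N := by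
          ext z
          constructor
          · exact fun h => h.1
          · intro h
            refine ⟨h, ?_⟩
            obtain ⟨n, hn, hzn⟩ := Set.mem_iUnion₂.1 h
            have h0 : (0:ℝ) ≤ P (g n) := (hprops (g n) (Finset.mem_filter.1 hn).2).1
            simp only [Set.mem_Iic, not_le]
            exact lt_of_le_of_lt h0 hzn.1
        rw [hWdiff] at this
        calc ENNReal.ofReal t' * volume (W N) ≤
            eVariationOn f (Set.Icc (0:ℝ) 1) + eVariationOn f (Set.Icc (0:ℝ) 1) := this
          _ = totalVar f + totalVar f := rfl
      calc ENNReal.ofReal t' * volume U = ENNReal.ofReal t' * ⨆ N, volume (W N) := by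
            rw [hUWeq, Directed.measure_iUnion (hWmono.directed_le)]
        _ = ⨆ N, ENNReal.ofReal t' * volume (W N) := by rw [ENNReal.mul_iSup]
        _ ≤ totalVar f + totalVar f := iSup_le hWbound
  calc ENNReal.ofReal t' * volume E ≤ ENNReal.ofReal t' * volume U :=
        mul_le_mul_right hvolEU _
    _ ≤ totalVar f + totalVar f := hvolU

/-- For every `f : [0,1] → ℝ`, `(1/2)·‖f‖_w ≤ V(f) ≤ ‖f‖_s`. -/
theorem weak_le_two_var_and_var_le_strong (f : ℝ → ℝ) :
    weakNorm f / 2 ≤ totalVar f ∧ totalVar f ≤ strongNorm f := by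
  constructor
  · rw [ENNReal.div_le_iff_le_mul (Or.inl two_ne_zero) (Or.inl ENNReal.ofNat_ne_top)]
    unfold weakNorm
    apply iSup_le
    intro t
    apply iSup_le
    intro ht
    rw [mul_two]
    apply ENNReal.le_of_forall_pos_le_add
    intro ε hε _
    set δ := min (t/2) (ε:ℝ) with hδ
    have hδpos : 0 < δ := lt_min (half_pos ht) (NNReal.coe_pos.2 hε)
    have ht' : 0 < t - δ := by
      have := min_le_left (t/2) (ε:ℝ)
      have h2 : δ ≤ t/2 := this
      linarith
    have htt : t - δ < t := by linarith
    have core := weak_core f ht' htt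
    set E := {x ∈ Set.Icc (0:ℝ) 1 | ENNReal.ofReal t ≤ locSlope f x} with hEset
    calc ENNReal.ofReal t * volume E
        ≤ (ENNReal.ofReal (t - δ) + ENNReal.ofReal δ) * volume E := by
          apply mul_le_mul_left
          rw [← ENNReal.ofReal_add ht'.le hδpos.le]
          apply ENNReal.ofReal_le_ofReal
          linarith
      _ = ENNReal.ofReal (t - δ) * volume E + ENNReal.ofReal δ * volume E := add_mul _ _ _
      _ ≤ (totalVar f + totalVar f) + ENNReal.ofReal δ * volume E := add_le_add_left core _
      _ ≤ (totalVar f + totalVar f) + ↑ε := by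
          apply add_le_add_right
          calc ENNReal.ofReal δ * volume E
              ≤ ENNReal.ofReal δ * volume (Set.Icc (0:ℝ) 1) :=
                mul_le_mul_right (measure_mono (Set.sep_subset _ _)) _
            _ = ENNReal.ofReal δ := by rw [Real.volume_Icc]; norm_num
            _ ≤ ↑ε := by
                rw [← ENNReal.ofReal_coe_nnreal]
                exact ENNReal.ofReal_le_ofReal (min_le_right _ _)
  · exact var_le_strong f
end

section
/- The strong average smoothness class is strictly contained in the bounded variation class: every f : [0,1] → ℝ with ‖f‖_s < ∞ satisfies V(f) < ∞, and there exists f : [0,1] → ℝ with V(f) < ∞ but ‖f‖_s = ∞. -/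
open MeasureTheory Set ENNReal

lemma le_locSlope (f : ℝ → ℝ) {x x' : ℝ} (hx' : x' ∈ Set.Icc (0:ℝ) 1) (hne : x' ≠ x) :
    ENNReal.ofReal (|f x - f x'| / |x - x'|) ≤ locSlope f x :=
  le_iSup_of_le x' (le_iSup_of_le hx' (le_iSup_of_le hne le_rfl))

lemma slope_lower (f : ℝ → ℝ) {a b x : ℝ} (ha : a ∈ Set.Icc (0:ℝ) 1)
    (hb : b ∈ Set.Icc (0:ℝ) 1) (hx : x ∈ Set.Ioc a b) :
    ENNReal.ofReal (|f b - f a| / (b - a)) ≤ locSlope f x := by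
  have hax : a < x := hx.1
  have hxb : x ≤ b := hx.2
  rcases eq_or_lt_of_le hxb with rfl | hxb
  · have : ENNReal.ofReal (|f x - f a| / |x - a|) ≤ locSlope f x :=
      le_locSlope f ha (ne_of_lt hax)
    rw [abs_of_pos (by linarith : (0:ℝ) < x - a)] at this
    exact this
  · -- a < x < b : mediant inequality
    set p := |f x - f a|
    set q := |f b - f x|
    set s := x - a
    set t := b - x
    have hs : (0:ℝ) < s := by simp only [s]; linarith
    have ht : (0:ℝ) < t := by simp only [t]; linarith
    have hM : |f b - f a| / (b - a) ≤ max (p / s) (q / t) := by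
      rw [div_le_iff₀ (by linarith : (0:ℝ) < b - a)]
      have h1 : p ≤ max (p / s) (q / t) * s := by
        calc p = (p / s) * s := by field_simp
        _ ≤ max (p / s) (q / t) * s := by
            apply mul_le_mul_of_nonneg_right (le_max_left _ _) hs.le
      have h2 : q ≤ max (p / s) (q / t) * t := by
        calc q = (q / t) * t := by field_simp
        _ ≤ max (p / s) (q / t) * t := by
            apply mul_le_mul_of_nonneg_right (le_max_right _ _) ht.le
      have habs : |f b - f a| ≤ p + q := by
        have : f b - f a = (f b - f x) + (f x - f a) := by ring
        rw [this]
        calc |(f b - f x) + (f x - f a)| ≤ |f b - f x| + |f x - f a| := abs_add_le _ _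
        _ = p + q := by simp only [p, q]; ring
      have : max (p / s) (q / t) * (b - a) = max (p / s) (q / t) * s + max (p / s) (q / t) * t := by
        simp only [s, t]; ring
      rw [this]
      linarith
    calc ENNReal.ofReal (|f b - f a| / (b - a)) ≤ ENNReal.ofReal (max (p / s) (q / t)) :=
          ENNReal.ofReal_le_ofReal hM
    _ ≤ locSlope f x := by
        rcases max_cases (p / s) (q / t) with ⟨hmax, _⟩ | ⟨hmax, _⟩
        · rw [hmax]
          have := le_locSlope f ha (ne_of_lt hax)
          rwa [abs_of_pos (by linarith : (0:ℝ) < x - a)] at this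
        · rw [hmax]
          have := le_locSlope f hb (ne_of_gt hxb)
          rw [show |x - b| = t by rw [abs_of_neg (by linarith : x - b < 0)]; simp [t]] at this
          rw [show |f x - f b| = q from abs_sub_comm _ _] at this
          exact this

lemma edist_le_lintegral (f : ℝ → ℝ) {a b : ℝ} (ha : a ∈ Set.Icc (0:ℝ) 1)
    (hb : b ∈ Set.Icc (0:ℝ) 1) (hab : a ≤ b) :
    edist (f b) (f a) ≤ ∫⁻ x in Set.Ioc a b, locSlope f x := by
  rcases eq_or_lt_of_le hab with rfl | hab
  · simp
  · have key : ENNReal.ofReal (|f b - f a| / (b - a)) * volume (Set.Ioc a b) ≤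
        ∫⁻ x in Set.Ioc a b, locSlope f x := by
      rw [← setLIntegral_const]
      exact setLIntegral_mono' measurableSet_Ioc fun x hx => slope_lower f ha hb hx
    calc edist (f b) (f a) = ENNReal.ofReal (|f b - f a|) := by
          rw [edist_dist, Real.dist_eq]
    _ = ENNReal.ofReal (|f b - f a| / (b - a)) * volume (Set.Ioc a b) := by
          rw [Real.volume_Ioc, ← ENNReal.ofReal_mul (div_nonneg (abs_nonneg _) (by linarith)),
            div_mul_cancel₀ _ (by linarith : b - a ≠ 0)]
    _ ≤ _ := key

lemma sum_lintegral_le (f : ℝ → ℝ) (u : ℕ → ℝ) (hu : Monotone u) (n : ℕ) :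
    ∑ i ∈ Finset.range n, ∫⁻ x in Set.Ioc (u i) (u (i+1)), locSlope f x ≤
      ∫⁻ x in Set.Ioc (u 0) (u n), locSlope f x := by
  induction n with
  | zero => simp
  | succ n ih =>
    rw [Finset.sum_range_succ]
    have hdisj : Disjoint (Set.Ioc (u 0) (u n)) (Set.Ioc (u n) (u (n+1))) := by
      rw [Set.disjoint_left]
      rintro x ⟨_, hx2⟩ ⟨hx3, _⟩
      exact absurd hx2 (not_le.mpr hx3)
    have hunion : Set.Ioc (u 0) (u n) ∪ Set.Ioc (u n) (u (n+1)) = Set.Ioc (u 0) (u (n+1)) :=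
      Set.Ioc_union_Ioc_eq_Ioc (hu (Nat.zero_le n)) (hu (Nat.le_succ n))
    calc _ ≤ (∫⁻ x in Set.Ioc (u 0) (u n), locSlope f x) +
          ∫⁻ x in Set.Ioc (u n) (u (n+1)), locSlope f x := add_le_add_left ih _
    _ = ∫⁻ x in Set.Ioc (u 0) (u (n+1)), locSlope f x := by
        rw [← lintegral_union measurableSet_Ioc hdisj, hunion]

lemma part1 (f : ℝ → ℝ) (hf : strongNorm f < ⊤) : totalVar f < ⊤ := by
  have h : totalVar f ≤ strongNorm f := by
    apply iSup_le
    rintro ⟨n, u, hu, us⟩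
    calc ∑ i ∈ Finset.range n, edist (f (u (i + 1))) (f (u i))
        ≤ ∑ i ∈ Finset.range n, ∫⁻ x in Set.Ioc (u i) (u (i+1)), locSlope f x := by
          apply Finset.sum_le_sum
          intro i _
          exact edist_le_lintegral f (us i) (us (i+1)) (hu (Nat.le_succ i))
    _ ≤ ∫⁻ x in Set.Ioc (u 0) (u n), locSlope f x := sum_lintegral_le f u hu n
    _ ≤ strongNorm f := lintegral_mono_set
          (Set.Ioc_subset_Icc_self.trans (Set.Icc_subset_Icc (us 0).1 (us n).2))
  exact lt_of_le_of_lt h hf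

/-- The jump function: `0` at `0`, `1` elsewhere. -/
noncomputable def jumpFun : ℝ → ℝ := fun x => if x = 0 then 0 else 1

lemma jump_mono : MonotoneOn jumpFun (Set.Icc (0:ℝ) 1) := by
  intro x hx y hy hxy
  unfold jumpFun
  by_cases hx0 : x = 0
  · simp [hx0]
    split <;> norm_num
  · have hy0 : y ≠ 0 := by
      intro h
      exact hx0 (le_antisymm (h ▸ hxy) hx.1)
    simp [hx0, hy0]

lemma jump_totalVar : totalVar jumpFun < ⊤ := by
  have := jump_mono.eVariationOn_le (Set.left_mem_Icc.mpr zero_le_one)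
    (Set.right_mem_Icc.mpr zero_le_one)
  rw [Set.inter_self] at this
  exact lt_of_le_of_lt (this) ENNReal.ofReal_lt_top

lemma inv_lintegral_top : ∫⁻ x in Set.Ioo (0:ℝ) 1, ENNReal.ofReal x⁻¹ = ⊤ := by
  by_contra h
  have hfin : (∫⁻ x in Set.Ioo (0:ℝ) 1, ENNReal.ofReal x⁻¹) < ⊤ := lt_top_iff_ne_top.mpr h
  have hInt : IntegrableOn (fun x : ℝ => x⁻¹) (Set.Ioo 0 1) := by
    refine ⟨(measurable_inv).aestronglyMeasurable, ?_⟩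
    rw [hasFiniteIntegral_iff_ofReal]
    · exact hfin
    · filter_upwards [ae_restrict_mem measurableSet_Ioo] with x hx
      exact inv_nonneg.mpr hx.1.le
  have hInt' : IntegrableOn (fun x : ℝ => x ^ (-1 : ℝ)) (Set.Ioo 0 1) := by
    apply hInt.congr_fun _ measurableSet_Ioo
    intro x hx
    exact (Real.rpow_neg_one x).symm
  have := (intervalIntegral.integrableOn_Ioo_rpow_iff one_pos).mp hInt'
  linarith

lemma jump_strongNorm : strongNorm jumpFun = ⊤ := by
  apply top_le_iff.mp
  calc (⊤ : ℝ≥0∞) = ∫⁻ x in Set.Ioo (0:ℝ) 1, ENNReal.ofReal x⁻¹ := inv_lintegral_top.symm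
  _ ≤ ∫⁻ x in Set.Ioo (0:ℝ) 1, locSlope jumpFun x := by
      apply setLIntegral_mono' measurableSet_Ioo
      intro x hx
      have hslope := le_locSlope jumpFun (x' := 0)
        (Set.left_mem_Icc.mpr zero_le_one) (ne_of_lt hx.1)
      have : |jumpFun x - jumpFun 0| / |x - 0| = x⁻¹ := by
        unfold jumpFun
        rw [if_pos rfl, if_neg (ne_of_gt hx.1), sub_zero, sub_zero,
          abs_one, abs_of_pos hx.1, one_div]
      rwa [this] at hslope
  _ ≤ strongNorm jumpFun := lintegral_mono_set Set.Ioo_subset_Icc_self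

/-- The strong average smoothness class is strictly contained in the BV class. -/
theorem strong_class_strictly_in_BV :
    (∀ f : ℝ → ℝ, strongNorm f < ⊤ → totalVar f < ⊤) ∧
    (∃ f : ℝ → ℝ, totalVar f < ⊤ ∧ strongNorm f = ⊤) := by
  exact ⟨part1, jumpFun, jump_totalVar, jump_strongNorm⟩
end

section
/- Covering lemma: for any finite sequence s_1, …, s_n of closed bounded intervals in ℝ, there exists a subset I ⊆ {1, …, n} such that the intervals {s_i : i ∈ I} are pairwise disjoint and Σ_{i ∈ I} λ(s_i) ≥ (1/2)·λ(⋃_{i=1}^n s_i), where λ denotes Lebesgue measure. -/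
open MeasureTheory Set ENNReal

theorem covering_key {ι : Type*} [DecidableEq ι] (a b : ι → ℝ) (hab : ∀ i, a i ≤ b i)
    (S : Finset ι) :
    ∃ I : Finset ι, I ⊆ S ∧
      ((I : Set ι).Pairwise fun i j => Disjoint (Set.Icc (a i) (b i)) (Set.Icc (a j) (b j))) ∧
      volume (⋃ i ∈ S, Set.Icc (a i) (b i)) ≤ (∑ i ∈ I, volume (Set.Icc (a i) (b i))) * 2 := by
  induction S using Finset.strongInduction with
  | _ S IH =>
  by_cases h : ∃ j ∈ S, Set.Icc (a j) (b j) ⊆ ⋃ i ∈ S.erase j, Set.Icc (a i) (b i)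
  · obtain ⟨j, hj, hsub⟩ := h
    obtain ⟨I, hIS, hdisj, hvol⟩ := IH (S.erase j) (Finset.erase_ssubset hj)
    refine ⟨I, hIS.trans (Finset.erase_subset _ _), hdisj, le_trans (measure_mono ?_) hvol⟩
    intro x hx
    obtain ⟨i, hiS, hxi⟩ := Set.mem_iUnion₂.mp hx
    by_cases hij : i = j
    · subst hij; exact hsub hxi
    · exact Set.mem_biUnion (Finset.mem_erase.mpr ⟨hij, hiS⟩) hxi
  · push_neg at h
    set l : List ι := S.toList.mergeSort (fun i j => decide (a i ≤ a j)) with hl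
    have hperm : l.Perm S.toList := List.mergeSort_perm _ _
    have hmem : ∀ i, i ∈ l ↔ i ∈ S := fun i => by
      rw [hperm.mem_iff, Finset.mem_toList]
    have hnd : l.Nodup := hperm.nodup_iff.mpr S.nodup_toList
    have hinj : Function.Injective l.get := List.nodup_iff_injective_get.mp hnd
    have hsorted : l.Pairwise (fun i j => a i ≤ a j) := by
      have := List.pairwise_mergeSort (le := fun i j => decide (a i ≤ a j))
        (fun i j k hij hjk => by
          simp only [decide_eq_true_eq] at *; exact le_trans hij hjk)
        (fun i j => by simpa using le_total (a i) (a j)) S.toList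
      exact this.imp (fun hx => by simpa using hx)
    have ha : ∀ p q : Fin l.length, p < q → a (l.get p) ≤ a (l.get q) :=
      fun p q hpq => List.pairwise_iff_get.mp hsorted p q hpq
    have hgetS : ∀ p : Fin l.length, l.get p ∈ S := fun p => (hmem _).mp (List.get_mem l p)
    have hb : ∀ p q : Fin l.length, p < q → b (l.get p) < b (l.get q) := by
      intro p q hpq
      by_contra hle
      push_neg at hle
      refine h (l.get q) (hgetS q) ?_
      refine fun y hy => Set.mem_biUnion
        (Finset.mem_erase.mpr ⟨fun e => (hpq.ne (hinj e)).elim, hgetS p⟩) ?_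
      exact ⟨le_trans (ha p q hpq) hy.1, le_trans hy.2 hle⟩
    have hdisj2 : ∀ p q : Fin l.length, p.val + 2 ≤ q.val →
        Disjoint (Set.Icc (a (l.get p)) (b (l.get p))) (Set.Icc (a (l.get q)) (b (l.get q))) := by
      intro p q hpq2
      by_contra hnd2
      obtain ⟨x, hxp, hxq⟩ := Set.not_disjoint_iff.mp hnd2
      have hm : p.val + 1 < l.length := by omega
      set m : Fin l.length := ⟨p.val + 1, hm⟩ with hmdef
      have hpm : p < m := by simp [hmdef, Fin.lt_def]
      have hmq : m < q := by simp only [hmdef, Fin.lt_def]; omega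
      refine h (l.get m) (hgetS m) ?_
      intro y hy
      rcases le_or_gt y (b (l.get p)) with hyb | hyb
      · refine Set.mem_biUnion (Finset.mem_erase.mpr
          ⟨fun e => (hpm.ne (hinj e)).elim, hgetS p⟩) ?_
        exact ⟨le_trans (ha p m hpm) hy.1, hyb⟩
      · refine Set.mem_biUnion (Finset.mem_erase.mpr
          ⟨fun e => (hmq.ne' (hinj e)).elim, hgetS q⟩) ?_
        exact ⟨le_of_lt (lt_of_le_of_lt (le_trans hxq.1 hxp.2) hyb),
          le_trans hy.2 (le_of_lt (hb m q hmq))⟩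
    -- sums over positions
    set g : Fin l.length → ℝ≥0∞ := fun p => volume (Set.Icc (a (l.get p)) (b (l.get p))) with hg
    have himg : (Finset.univ : Finset (Fin l.length)).image l.get = S := by
      ext i
      simp only [Finset.mem_image, Finset.mem_univ, true_and]
      constructor
      · rintro ⟨p, rfl⟩; exact hgetS p
      · intro hiS
        obtain ⟨p, hp⟩ := List.mem_iff_get.mp ((hmem i).mpr hiS)
        exact ⟨p, hp⟩
    have hsumS : ∑ i ∈ S, volume (Set.Icc (a i) (b i)) = ∑ p : Fin l.length, g p := by
      rw [← himg, Finset.sum_image (fun p _ q _ e => hinj e)]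
    have htot : volume (⋃ i ∈ S, Set.Icc (a i) (b i)) ≤ ∑ p : Fin l.length, g p := by
      rw [← hsumS]
      exact measure_biUnion_finset_le _ _
    set Pe : Finset (Fin l.length) := Finset.univ.filter (fun p => Even p.val) with hPe
    set Po : Finset (Fin l.length) := Finset.univ.filter (fun p => ¬ Even p.val) with hPo
    have hsplit : ∑ p ∈ Pe, g p + ∑ p ∈ Po, g p = ∑ p : Fin l.length, g p :=
      Finset.sum_filter_add_sum_filter_not _ _ _
    -- choose the bigger one
    have hkey : ∀ P0 : Finset (Fin l.length),
        (∀ p ∈ P0, ∀ q ∈ P0, p ≠ q → (p.val + 2 ≤ q.val ∨ q.val + 2 ≤ p.val)) →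
        ∑ p : Fin l.length, g p ≤ (∑ p ∈ P0, g p) * 2 →
        ∃ I : Finset ι, I ⊆ S ∧
          ((I : Set ι).Pairwise fun i j => Disjoint (Set.Icc (a i) (b i)) (Set.Icc (a j) (b j))) ∧
          volume (⋃ i ∈ S, Set.Icc (a i) (b i)) ≤ (∑ i ∈ I, volume (Set.Icc (a i) (b i))) * 2 := by
      intro P0 hgap hP0
      refine ⟨P0.image l.get, ?_, ?_, ?_⟩
      · intro i hi
        obtain ⟨p, _, rfl⟩ := Finset.mem_image.mp hi
        exact hgetS p
      · intro i hi j hj hij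
        simp only [Finset.coe_image, Set.mem_image, Finset.mem_coe] at hi hj
        obtain ⟨p, hp, rfl⟩ := hi
        obtain ⟨q, hq, rfl⟩ := hj
        have hpq : p ≠ q := fun e => hij (by rw [e])
        rcases hgap p hp q hq hpq with hc | hc
        · exact hdisj2 p q hc
        · exact (hdisj2 q p hc).symm
      · rw [Finset.sum_image (fun p _ q _ e => hinj e)]
        exact le_trans htot hP0
    rcases le_total (∑ p ∈ Po, g p) (∑ p ∈ Pe, g p) with hc | hc
    · refine hkey Pe ?_ ?_
      · intro p hp q hq hpq
        have hep : Even p.val := (Finset.mem_filter.mp hp).2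
        have heq : Even q.val := (Finset.mem_filter.mp hq).2
        have : p.val ≠ q.val := fun e => hpq (Fin.ext e)
        obtain ⟨c, hcp⟩ := hep
        obtain ⟨d, hcq⟩ := heq
        omega
      · rw [← hsplit]
        calc ∑ p ∈ Pe, g p + ∑ p ∈ Po, g p ≤ ∑ p ∈ Pe, g p + ∑ p ∈ Pe, g p :=
              add_le_add_right hc _
          _ = (∑ p ∈ Pe, g p) * 2 := by ring
    · refine hkey Po ?_ ?_
      · intro p hp q hq hpq
        have hep : ¬ Even p.val := (Finset.mem_filter.mp hp).2
        have heq : ¬ Even q.val := (Finset.mem_filter.mp hq).2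
        have : p.val ≠ q.val := fun e => hpq (Fin.ext e)
        rw [Nat.not_even_iff_odd] at hep heq
        obtain ⟨c, hcp⟩ := hep
        obtain ⟨d, hcq⟩ := heq
        omega
      · rw [← hsplit]
        calc ∑ p ∈ Pe, g p + ∑ p ∈ Po, g p ≤ ∑ p ∈ Po, g p + ∑ p ∈ Po, g p :=
              add_le_add_left hc _
          _ = (∑ p ∈ Po, g p) * 2 := by ring


/-- Covering lemma: from any finite family of closed bounded intervals one can choose a
pairwise disjoint subfamily whose total length is at least half the measure of the union. -/
theorem covering_lemma (n : ℕ) (a b : Fin n → ℝ) (hab : ∀ i, a i ≤ b i) :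
    ∃ I : Finset (Fin n),
      ((I : Set (Fin n)).Pairwise fun i j =>
        Disjoint (Set.Icc (a i) (b i)) (Set.Icc (a j) (b j))) ∧
      volume (⋃ i, Set.Icc (a i) (b i)) / 2 ≤ ∑ i ∈ I, volume (Set.Icc (a i) (b i)) := by
  obtain ⟨I, -, hdisj, hvol⟩ := covering_key a b hab Finset.univ
  refine ⟨I, hdisj, ?_⟩
  have hU : (⋃ i, Set.Icc (a i) (b i)) =
      ⋃ i ∈ (Finset.univ : Finset (Fin n)), Set.Icc (a i) (b i) := by simp
  rw [hU]
  exact ENNReal.div_le_of_le_mul hvol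
end

section
/- Reduction to right-continuous monotone functions: if ‖g‖_w ≤ 2·V(g) holds for every nondecreasing, right-continuous function g : [0,1] → ℝ, then ‖f‖_w ≤ 2·V(f) holds for every function f : [0,1] → ℝ. -/
open MeasureTheory Set ENNReal

namespace RedAux

open Filter Function

/-- The (clipped) variation function of `f`: the variation of `f` on `[0, x]` (clipped to
`[0,1]`), as a real number. -/
noncomputable def vfun (f : ℝ → ℝ) (x : ℝ) : ℝ :=
  (eVariationOn f (Set.Icc 0 (max 0 (min x 1)))).toReal

lemma clip_le_one (x : ℝ) : max 0 (min x 1) ≤ 1 := max_le zero_le_one (min_le_right _ _)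

lemma clip_mono : Monotone fun x : ℝ => max 0 (min x 1) :=
  fun _ _ hab => max_le_max le_rfl (min_le_min hab le_rfl)

lemma evar_le (f : ℝ → ℝ) (x : ℝ) :
    eVariationOn f (Set.Icc 0 (max 0 (min x 1))) ≤ eVariationOn f (Set.Icc 0 1) :=
  eVariationOn.mono f (Set.Icc_subset_Icc le_rfl (clip_le_one x))

lemma vfun_nonneg (f : ℝ → ℝ) (x : ℝ) : 0 ≤ vfun f x := ENNReal.toReal_nonneg

lemma vfun_mono {f : ℝ → ℝ} (hfin : eVariationOn f (Set.Icc 0 1) ≠ ⊤) : Monotone (vfun f) :=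
  fun _ b hab => ENNReal.toReal_mono (ne_top_of_le_ne_top hfin (evar_le f b))
    (eVariationOn.mono f (Set.Icc_subset_Icc le_rfl (clip_mono hab)))

lemma vfun_eq {f : ℝ → ℝ} {x : ℝ} (h0 : 0 ≤ x) (h1 : x ≤ 1) :
    vfun f x = (eVariationOn f (Set.Icc 0 x)).toReal := by
  rw [vfun, min_eq_left h1, max_eq_right h0]

lemma vfun_zero (f : ℝ → ℝ) : vfun f 0 = 0 := by
  rw [vfun_eq le_rfl zero_le_one, Set.Icc_self,
    eVariationOn.subsingleton f (Set.subsingleton_singleton), ENNReal.toReal_zero]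

lemma vfun_one_le (f : ℝ → ℝ) {x : ℝ} (hx : 1 ≤ x) : vfun f x = vfun f 1 := by
  rw [vfun, vfun, min_eq_right hx, min_self]

lemma vfun_add {f : ℝ → ℝ} (hfin : eVariationOn f (Set.Icc 0 1) ≠ ⊤) {a b : ℝ}
    (h0 : 0 ≤ a) (hab : a ≤ b) (h1 : b ≤ 1) :
    vfun f b = vfun f a + (eVariationOn f (Set.Icc a b)).toReal := by
  have key := eVariationOn.Icc_add_Icc f (s := Set.univ) h0 hab (Set.mem_univ a)
  simp only [Set.univ_inter] at key
  have fin1 : eVariationOn f (Set.Icc 0 a) ≠ ⊤ :=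
    ne_top_of_le_ne_top hfin (eVariationOn.mono f (Set.Icc_subset_Icc le_rfl (hab.trans h1)))
  have fin2 : eVariationOn f (Set.Icc a b) ≠ ⊤ :=
    ne_top_of_le_ne_top hfin (eVariationOn.mono f (Set.Icc_subset_Icc h0 h1))
  rw [vfun_eq (h0.trans hab) h1, vfun_eq h0 (hab.trans h1), ← key,
    ENNReal.toReal_add fin1 fin2]

lemma abs_sub_le_vfun {f : ℝ → ℝ} (hfin : eVariationOn f (Set.Icc 0 1) ≠ ⊤) {a b : ℝ}
    (h0 : 0 ≤ a) (hab : a ≤ b) (h1 : b ≤ 1) :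
    |f b - f a| ≤ vfun f b - vfun f a := by
  have fin2 : eVariationOn f (Set.Icc a b) ≠ ⊤ :=
    ne_top_of_le_ne_top hfin (eVariationOn.mono f (Set.Icc_subset_Icc h0 h1))
  have hle := eVariationOn.edist_le f (show b ∈ Set.Icc a b from ⟨hab, le_rfl⟩)
    (show a ∈ Set.Icc a b from ⟨le_rfl, hab⟩)
  have habs : |f b - f a| = (edist (f b) (f a)).toReal := by
    rw [edist_dist, ENNReal.toReal_ofReal dist_nonneg, Real.dist_eq]
  have := ENNReal.toReal_mono fin2 hle
  rw [vfun_add hfin h0 hab h1, habs]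
  linarith

lemma div_mono_num {a b c : ℝ} (h : a ≤ b) (hc : 0 < c) : a / c ≤ b / c := by
  gcongr

end RedAux

open Filter Function in
/-- Reduction to right-continuous monotone functions: if `‖g‖_w ≤ 2·V(g)` holds for every
nondecreasing right-continuous `g : [0,1] → ℝ`, then it holds for every `f : [0,1] → ℝ`. -/
theorem reduction_to_rc_monotone
    (h : ∀ g : ℝ → ℝ, MonotoneOn g (Set.Icc 0 1) →
      (∀ x ∈ Set.Icc (0:ℝ) 1, ContinuousWithinAt g (Set.Icc x 1) x) →
      weakNorm g ≤ 2 * totalVar g) :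
    ∀ f : ℝ → ℝ, weakNorm f ≤ 2 * totalVar f := by
  intro f
  by_cases hfin : totalVar f = ⊤
  · rw [hfin, ENNReal.mul_top (by norm_num)]; exact le_top
  rw [totalVar] at hfin
  set v : ℝ → ℝ := RedAux.vfun f with hv_def
  have hv : Monotone v := RedAux.vfun_mono hfin
  set G : StieltjesFunction ℝ := hv.stieltjesFunction with hG_def
  have hGr : ∀ x, G x = rightLim v x := fun _ => rfl
  have hGv : ∀ x, ContinuousAt v x → G x = v x := by
    intro x hx
    rw [hGr]
    exact rightLim_eq_of_tendsto
      (hx.tendsto.mono_left nhdsWithin_le_nhds)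
  have hbad : Set.Countable {x | G x ≠ v x} := by
    refine Set.Countable.mono ?_ hv.countable_not_continuousAt
    intro x hx
    simp only [Set.mem_setOf_eq] at hx ⊢
    exact fun hc => hx (hGv x hc)
  have hvG : ∀ x, v x ≤ G x := fun x => hv.le_rightLim le_rfl
  have hG0 : ∀ x, 0 ≤ G x := fun x => (RedAux.vfun_nonneg f x).trans (hvG x)
  have hG1 : G 1 = v 1 := by
    rw [hGr]
    refine rightLim_eq_of_tendsto ?_
    refine Tendsto.congr' ?_ tendsto_const_nhds
    filter_upwards [self_mem_nhdsWithin] with y hy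
    exact (RedAux.vfun_one_le f (le_of_lt hy)).symm
  have key : ∀ t : ℝ, 0 < t → ∀ ε : ℝ, 0 < ε →
      ENNReal.ofReal t * volume {x ∈ Set.Icc (0:ℝ) 1 | ENNReal.ofReal t ≤ locSlope f x}
        ≤ 2 * totalVar f + ENNReal.ofReal (t * ε) := by
    intro t ht ε hε
    obtain ⟨δ, hδmem, hδgood⟩ : ∃ δ, δ ∈ Set.Ioo (0:ℝ) (min ε 1) ∧ G δ = v δ := by
      by_contra hcon
      push_neg at hcon
      have hsub : Set.Ioo (0:ℝ) (min ε 1) ⊆ {x | G x ≠ v x} := fun x hx => hcon x hx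
      have hm := (measure_mono hsub).trans_eq (hbad.measure_zero volume)
      rw [Real.volume_Ioo, sub_zero] at hm
      have hpos : (0:ℝ≥0∞) < ENNReal.ofReal (min ε 1) :=
        ENNReal.ofReal_pos.2 (lt_min hε one_pos)
      exact absurd hm hpos.not_ge
    obtain ⟨hδ0, hδlt⟩ := hδmem
    have hδε : δ < ε := hδlt.trans_le (min_le_left _ _)
    have hδ1 : δ < 1 := hδlt.trans_le (min_le_right _ _)
    set g : ℝ → ℝ := fun x => if x < δ then 0 else G x with hg_def
    have hgval_lt : ∀ {x}, x < δ → g x = 0 := fun hx => if_pos hx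
    have hgval_ge : ∀ {x}, δ ≤ x → g x = G x := fun hx => if_neg (not_lt.2 hx)
    have hmono : Monotone g := by
      intro a b hab
      by_cases ha : a < δ
      · rw [hgval_lt ha]
        by_cases hb : b < δ
        · rw [hgval_lt hb]
        · rw [hgval_ge (not_lt.1 hb)]; exact hG0 b
      · have hb : ¬ b < δ := fun hb => ha (lt_of_le_of_lt hab hb)
        rw [hgval_ge (not_lt.1 ha), hgval_ge (not_lt.1 hb)]
        exact G.mono hab
    have hrc : ∀ x ∈ Set.Icc (0:ℝ) 1, ContinuousWithinAt g (Set.Icc x 1) x := by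
      intro x _
      by_cases hxδ : x < δ
      · have heq : g =ᶠ[nhds x] fun _ => (0:ℝ) := by
          filter_upwards [Iio_mem_nhds hxδ] with y hy
          exact hgval_lt hy
        exact ((continuousAt_congr heq).2 continuousAt_const).continuousWithinAt
      · refine ((G.right_continuous x).mono
          (Set.Icc_subset_Ici_self : Set.Icc x 1 ⊆ Set.Ici x)).congr ?_ ?_
        · intro y hy; exact hgval_ge ((not_lt.1 hxδ).trans hy.1)
        · exact hgval_ge (not_lt.1 hxδ)
    have hgvar : totalVar g ≤ totalVar f := by
      have hmOn : MonotoneOn g (Set.Icc (0:ℝ) 1) := hmono.monotoneOn _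
      have hvar := hmOn.eVariationOn_le (Set.left_mem_Icc.2 zero_le_one)
        (Set.right_mem_Icc.2 zero_le_one)
      rw [Set.inter_self] at hvar
      rw [totalVar, totalVar]
      refine hvar.trans ?_
      rw [hgval_ge hδ1.le, hgval_lt hδ0, hG1, sub_zero, hv_def,
        RedAux.vfun_eq zero_le_one le_rfl, ENNReal.ofReal_toReal hfin]
    have hmain : ∀ x, δ < x → x ≤ 1 → G x = v x → locSlope f x ≤ locSlope g x := by
      intro x hδx hx1 hGx
      have hx0 : 0 < x := hδ0.trans hδx
      have hgx : g x = v x := by rw [hgval_ge hδx.le, hGx]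
      have hle : ∀ y ∈ Set.Icc (0:ℝ) 1, y ≠ x →
          ENNReal.ofReal (|g x - g y| / |x - y|) ≤ locSlope g x :=
        fun y hy hney => le_iSup_of_le y (le_iSup_of_le hy (le_iSup_of_le hney le_rfl))
      rw [locSlope]
      refine iSup_le fun x' => iSup_le fun hx' => iSup_le fun hne => ?_
      rcases lt_or_gt_of_ne hne with hlt | hgt
      · -- x' < x
        have h1 : |f x - f x'| ≤ v x - v x' := RedAux.abs_sub_le_vfun hfin hx'.1 hlt.le hx1
        by_cases hx'δ : δ < x'
        · -- approximation from the left of x'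
          have hA0 : 0 ≤ v x - v x' := sub_nonneg.2 (hv hlt.le)
          have hstep : ∀ y ∈ Set.Ioo δ x',
              ENNReal.ofReal ((v x - v x') / (x - y)) ≤ locSlope g x := by
            intro y hy
            have hyx : y < x := hy.2.trans hlt
            have hy01 : y ∈ Set.Icc (0:ℝ) 1 := ⟨hδ0.le.trans hy.1.le, hyx.le.trans hx1⟩
            have hgy : g y ≤ v x' := by
              rw [hgval_ge hy.1.le, hGr]; exact hv.rightLim_le hy.2
            have h2 : (v x - v x') / (x - y) ≤ |g x - g y| / |x - y| := by
              rw [abs_of_pos (sub_pos.2 hyx), abs_of_nonneg (sub_nonneg.2 (hmono hyx.le))]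
              refine RedAux.div_mono_num ?_ (sub_pos.2 hyx)
              rw [hgx]; linarith
            exact le_trans (ENNReal.ofReal_le_ofReal h2) (hle y hy01 (ne_of_lt hyx))
          have hcont : Tendsto (fun y : ℝ => ENNReal.ofReal ((v x - v x') / (x - y)))
              (nhdsWithin x' (Set.Iio x'))
              (nhds (ENNReal.ofReal ((v x - v x') / (x - x')))) := by
            have c1 : ContinuousAt (fun y : ℝ => (v x - v x') / (x - y)) x' := by
              apply ContinuousAt.div continuousAt_const (by fun_prop)
              exact sub_ne_zero.2 (ne_of_gt hlt)
            exact ((ENNReal.continuous_ofReal.continuousAt).comp c1).tendsto.mono_left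
              nhdsWithin_le_nhds
          have hlim : ENNReal.ofReal ((v x - v x') / (x - x')) ≤ locSlope g x := by
            refine le_of_tendsto hcont ?_
            filter_upwards [Ioo_mem_nhdsLT_of_mem
              (show x' ∈ Set.Ioc δ x' from ⟨hx'δ, le_rfl⟩)] with y hy
            exact hstep y hy
          refine le_trans ?_ hlim
          apply ENNReal.ofReal_le_ofReal
          rw [abs_of_pos (sub_pos.2 hlt)]
          exact RedAux.div_mono_num h1 (sub_pos.2 hlt)
        · -- x' ≤ δ : direct comparison
          have hx'le : x' ≤ δ := not_lt.1 hx'δ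
          have hgx' : g x' ≤ v x' := by
            rcases lt_or_eq_of_le hx'le with hc | hc
            · rw [hgval_lt hc]; exact RedAux.vfun_nonneg f x'
            · rw [hc, hgval_ge le_rfl, hδgood]
          refine le_trans ?_ (hle x' hx' hne)
          apply ENNReal.ofReal_le_ofReal
          rw [abs_of_pos (sub_pos.2 hlt), abs_of_nonneg (sub_nonneg.2 (hmono hlt.le))]
          refine RedAux.div_mono_num ?_ (sub_pos.2 hlt)
          linarith
      · -- x < x'
        have h1 : |f x - f x'| ≤ v x' - v x := by
          rw [abs_sub_comm]
          exact RedAux.abs_sub_le_vfun hfin hx0.le hgt.le hx'.2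
        have hgx' : v x' ≤ g x' := by
          rw [hgval_ge (hδx.trans hgt).le]; exact hvG x'
        refine le_trans ?_ (hle x' hx' hne)
        apply ENNReal.ofReal_le_ofReal
        have e1 : |x - x'| = x' - x := by
          rw [abs_sub_comm]; exact abs_of_pos (sub_pos.2 hgt)
        have e2 : |g x - g x'| = g x' - g x := by
          rw [abs_sub_comm]; exact abs_of_nonneg (sub_nonneg.2 (hmono hgt.le))
        rw [e1, e2]
        refine RedAux.div_mono_num ?_ (sub_pos.2 hgt)
        rw [hgx]; linarith
    -- measure estimate
    have hsub : {x ∈ Set.Icc (0:ℝ) 1 | ENNReal.ofReal t ≤ locSlope f x} ⊆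
        {x ∈ Set.Icc (0:ℝ) 1 | ENNReal.ofReal t ≤ locSlope g x} ∪
          (Set.Icc 0 δ ∪ {x | G x ≠ v x}) := by
      intro x hx
      simp only [Set.mem_setOf_eq] at hx
      by_cases h1 : x ≤ δ
      · exact Or.inr (Or.inl ⟨hx.1.1, h1⟩)
      by_cases h2 : G x = v x
      · exact Or.inl ⟨hx.1, hx.2.trans (hmain x (not_le.1 h1) hx.1.2 h2)⟩
      · exact Or.inr (Or.inr h2)
    have hvol : volume {x ∈ Set.Icc (0:ℝ) 1 | ENNReal.ofReal t ≤ locSlope f x} ≤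
        volume {x ∈ Set.Icc (0:ℝ) 1 | ENNReal.ofReal t ≤ locSlope g x} + ENNReal.ofReal δ := by
      refine (measure_mono hsub).trans ?_
      refine (measure_union_le _ _).trans ?_
      gcongr
      refine (measure_union_le _ _).trans ?_
      rw [hbad.measure_zero volume, Real.volume_Icc, add_zero, sub_zero]
    calc ENNReal.ofReal t * volume {x ∈ Set.Icc (0:ℝ) 1 | ENNReal.ofReal t ≤ locSlope f x}
        ≤ ENNReal.ofReal t * volume {x ∈ Set.Icc (0:ℝ) 1 | ENNReal.ofReal t ≤ locSlope g x}
            + ENNReal.ofReal t * ENNReal.ofReal δ := by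
          rw [← mul_add]; exact mul_le_mul_right hvol _
      _ ≤ weakNorm g + ENNReal.ofReal (t * ε) := by
          gcongr
          · exact le_iSup_of_le t (le_iSup_of_le ht le_rfl)
          · rw [← ENNReal.ofReal_mul ht.le]
            exact ENNReal.ofReal_le_ofReal (by nlinarith)
      _ ≤ 2 * totalVar g + ENNReal.ofReal (t * ε) := by
          gcongr
          exact h g (hmono.monotoneOn _) hrc
      _ ≤ 2 * totalVar f + ENNReal.ofReal (t * ε) := by gcongr
  rw [weakNorm]
  refine iSup_le fun t => iSup_le fun ht => ?_
  refine ENNReal.le_of_forall_pos_le_add fun ε hε _ => ?_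
  have hε0 : (0:ℝ) < (ε:ℝ) / t := div_pos (by exact_mod_cast hε) ht
  refine (key t ht _ hε0).trans ?_
  rw [mul_div_cancel₀ (ε:ℝ) (ne_of_gt ht), ENNReal.ofReal_coe_nnreal]
end

section
/- For a nondecreasing function f : [0,1] → ℝ that is right-continuous at 0, let f̃ : [0,1] → ℝ be its right-continuous modification, i.e. f̃(x) = lim_{ε→0^+} f(x+ε) for x < 1 and f̃(1) = f(1). Then V(f̃) = V(f), Λ_{f̃}(x) = Λ_f(x) at every point x at which f is right-continuous, and ‖f̃‖_w = ‖f‖_w. -/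
open MeasureTheory Set ENNReal

section Aux

variable {f ftil : ℝ → ℝ}

lemma aux_le_rt (hmono : MonotoneOn f (Set.Icc 0 1))
    (hlim : ∀ x ∈ Set.Ico (0:ℝ) 1,
      Filter.Tendsto f (nhdsWithin x (Set.Ioi x)) (nhds (ftil x)))
    {x : ℝ} (hx : x ∈ Set.Ico (0:ℝ) 1) : f x ≤ ftil x := by
  refine ge_of_tendsto (hlim x hx) ?_
  filter_upwards [Ioo_mem_nhdsGT_of_mem ⟨le_refl x, hx.2⟩] with y hy
  exact hmono ⟨hx.1, hx.2.le⟩ ⟨hx.1.trans hy.1.le, hy.2.le⟩ hy.1.le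

lemma aux_rt_le (hmono : MonotoneOn f (Set.Icc 0 1))
    (hlim : ∀ x ∈ Set.Ico (0:ℝ) 1,
      Filter.Tendsto f (nhdsWithin x (Set.Ioi x)) (nhds (ftil x)))
    {x y : ℝ} (hx : x ∈ Set.Ico (0:ℝ) 1) (hxy : x < y) (hy1 : y ≤ 1) :
    ftil x ≤ f y := by
  refine le_of_tendsto (hlim x hx) ?_
  filter_upwards [Ioo_mem_nhdsGT_of_mem ⟨le_refl x, hxy⟩] with z hz
  exact hmono ⟨hx.1.trans hz.1.le, hz.2.le.trans hy1⟩
    ⟨hx.1.trans hxy.le, hy1⟩ hz.2.le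

lemma aux_rc_eq
    (hlim : ∀ x ∈ Set.Ico (0:ℝ) 1,
      Filter.Tendsto f (nhdsWithin x (Set.Ioi x)) (nhds (ftil x)))
    (h1 : ftil 1 = f 1) {x : ℝ} (hx : x ∈ Set.Icc (0:ℝ) 1)
    (hc : ContinuousWithinAt f (Set.Icc x 1) x) : ftil x = f x := by
  rcases eq_or_lt_of_le hx.2 with h | h
  · subst h; exact h1
  · have h2 : Filter.Tendsto f (nhdsWithin x (Set.Ioi x)) (nhds (f x)) := by
      have := hc.tendsto.mono_left (nhdsWithin_mono x Set.Ioc_subset_Icc_self)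
      rwa [nhdsWithin_Ioc_eq_nhdsGT h] at this
    exact tendsto_nhds_unique (hlim x ⟨hx.1, h⟩) h2

lemma aux_rc_of_eq
    (hlim : ∀ x ∈ Set.Ico (0:ℝ) 1,
      Filter.Tendsto f (nhdsWithin x (Set.Ioi x)) (nhds (ftil x)))
    {x : ℝ} (hx : x ∈ Set.Ico (0:ℝ) 1) (heq : ftil x = f x) :
    ContinuousWithinAt f (Set.Icc x 1) x := by
  have hset : Set.Icc x 1 = {x} ∪ Set.Ioc x 1 := by
    ext y
    simp only [Set.mem_Icc, Set.mem_union, Set.mem_singleton_iff, Set.mem_Ioc]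
    constructor
    · rintro ⟨hh1, hh2⟩
      rcases eq_or_lt_of_le hh1 with h | h
      · exact Or.inl h.symm
      · exact Or.inr ⟨h, hh2⟩
    · rintro (rfl | ⟨hh1, hh2⟩)
      · exact ⟨le_rfl, hx.2.le⟩
      · exact ⟨hh1.le, hh2⟩
  unfold ContinuousWithinAt
  rw [hset, nhdsWithin_union, Filter.tendsto_sup]
  constructor
  · rw [nhdsWithin_singleton]
    exact tendsto_pure_nhds f x
  · have := hlim x hx
    rw [heq] at this
    exact this.mono_left (by rw [nhdsWithin_Ioc_eq_nhdsGT hx.2])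

lemma aux_mono (hmono : MonotoneOn f (Set.Icc 0 1))
    (hlim : ∀ x ∈ Set.Ico (0:ℝ) 1,
      Filter.Tendsto f (nhdsWithin x (Set.Ioi x)) (nhds (ftil x)))
    (h1 : ftil 1 = f 1) : MonotoneOn ftil (Set.Icc 0 1) := by
  intro x hx y hy hxy
  rcases eq_or_lt_of_le hxy with rfl | hlt
  · exact le_rfl
  · have hx' : x ∈ Set.Ico (0:ℝ) 1 := ⟨hx.1, lt_of_lt_of_le hlt hy.2⟩
    rcases eq_or_lt_of_le hy.2 with h | h
    · subst h
      rw [h1]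
      exact aux_rt_le hmono hlim hx' hlt le_rfl
    · exact (aux_rt_le hmono hlim hx' hlt hy.2).trans
        (aux_le_rt hmono hlim ⟨hy.1, h⟩)

lemma aux_monoVar {g : ℝ → ℝ} (hg : MonotoneOn g (Set.Icc 0 1)) :
    eVariationOn g (Set.Icc 0 1) = ENNReal.ofReal (g 1 - g 0) := by
  apply le_antisymm
  · have := hg.eVariationOn_le (a := 0) (b := 1) ⟨le_rfl, zero_le_one⟩ ⟨zero_le_one, le_rfl⟩
    rwa [Set.inter_self] at this
  · have := eVariationOn.edist_le g (x := 0) (y := 1)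
      (Set.mem_Icc.2 ⟨le_rfl, zero_le_one⟩) (Set.mem_Icc.2 ⟨zero_le_one, le_rfl⟩)
    rwa [edist_dist, Real.dist_eq, abs_sub_comm, abs_of_nonneg (sub_nonneg.2
      (hg ⟨le_rfl, zero_le_one⟩ ⟨zero_le_one, le_rfl⟩ zero_le_one))] at this

lemma term_le_locSlope (g : ℝ → ℝ) {x x' : ℝ} (h1 : x' ∈ Set.Icc (0:ℝ) 1) (h2 : x' ≠ x) :
    ENNReal.ofReal (|g x - g x'| / |x - x'|) ≤ locSlope g x :=
  le_iSup_of_le x' (le_iSup_of_le h1 (le_iSup_of_le h2 le_rfl))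

lemma aux_slope_eq (hmono : MonotoneOn f (Set.Icc 0 1))
    (h0 : ContinuousWithinAt f (Set.Icc (0:ℝ) 1) 0)
    (hlim : ∀ x ∈ Set.Ico (0:ℝ) 1,
      Filter.Tendsto f (nhdsWithin x (Set.Ioi x)) (nhds (ftil x)))
    (h1 : ftil 1 = f 1) {x : ℝ} (hx : x ∈ Set.Icc (0:ℝ) 1)
    (hc : ContinuousWithinAt f (Set.Icc x 1) x) :
    locSlope ftil x = locSlope f x := by
  have hfx : ftil x = f x := aux_rc_eq hlim h1 hx hc
  apply le_antisymm
  · -- locSlope ftil x ≤ locSlope f x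
    refine iSup_le fun x' => iSup_le fun hmem => iSup_le fun hne => ?_
    rcases eq_or_lt_of_le hmem.2 with rfl | hx'1
    · rw [hfx, h1]
      exact term_le_locSlope f hmem hne
    rcases lt_or_gt_of_ne hne with hlt | hlt
    · -- x' < x : pointwise domination
      have hA : f x' ≤ ftil x' := aux_le_rt hmono hlim ⟨hmem.1, hx'1⟩
      have hB : ftil x' ≤ f x := aux_rt_le hmono hlim ⟨hmem.1, hx'1⟩ hlt hx.2
      have hfle : f x' ≤ f x := hmono hmem hx hlt.le
      refine le_trans ?_ (term_le_locSlope f hmem hne)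
      apply ENNReal.ofReal_le_ofReal
      have hpos : (0:ℝ) < |x - x'| := abs_pos.2 (sub_ne_zero_of_ne (Ne.symm hne))
      rw [hfx, abs_of_nonneg (sub_nonneg.2 hB), abs_of_nonneg (sub_nonneg.2 hfle)]
      gcongr
    · -- x < x' : limit of difference quotients from the right of x'
      have hne0 : |x - x'| ≠ 0 := abs_ne_zero.2 (sub_ne_zero_of_ne (Ne.symm hne))
      have htend : Filter.Tendsto (fun y => ENNReal.ofReal (|f x - f y| / |x - y|))
          (nhdsWithin x' (Set.Ioi x'))
          (nhds (ENNReal.ofReal (|f x - ftil x'| / |x - x'|))) := by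
        apply ENNReal.tendsto_ofReal
        exact Filter.Tendsto.div
          ((tendsto_const_nhds.sub (hlim x' ⟨hmem.1, hx'1⟩)).abs)
          ((tendsto_const_nhds.sub (Filter.tendsto_id.mono_left nhdsWithin_le_nhds)).abs) hne0
      rw [hfx]
      refine le_of_tendsto htend ?_
      filter_upwards [Ioo_mem_nhdsGT_of_mem ⟨le_refl x', hx'1⟩] with y hy
      exact term_le_locSlope f ⟨hmem.1.trans hy.1.le, hy.2.le⟩ (hlt.trans hy.1).ne'
  · -- locSlope f x ≤ locSlope ftil x
    refine iSup_le fun x' => iSup_le fun hmem => iSup_le fun hne => ?_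
    rcases eq_or_lt_of_le hmem.2 with rfl | hx'1
    · rw [← hfx, ← h1]
      exact term_le_locSlope ftil hmem hne
    rcases lt_or_gt_of_ne hne with hlt | hlt
    · -- x' < x
      rcases eq_or_lt_of_le hmem.1 with rfl | hx'0
      · have h00 : ftil 0 = f 0 := aux_rc_eq hlim h1 ⟨le_rfl, zero_le_one⟩ h0
        rw [← hfx, ← h00]
        exact term_le_locSlope ftil hmem hne
      · -- 0 < x' < x : limit from the left of x'
        have hfle : f x' ≤ f x := hmono hmem hx hlt.le
        have key : ∀ y ∈ Set.Ioo (0:ℝ) x',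
            ENNReal.ofReal ((f x - f x') / (x - y)) ≤ locSlope ftil x := by
          intro y hy
          have hylt : y < x := hy.2.trans hlt
          have hyIco : y ∈ Set.Ico (0:ℝ) 1 := ⟨hy.1.le, hylt.trans_le hx.2⟩
          have h2 : ftil y ≤ f x' := aux_rt_le hmono hlim hyIco hy.2 hmem.2
          have h3 : ftil y ≤ f x := h2.trans hfle
          refine le_trans ?_ (term_le_locSlope ftil ⟨hy.1.le, (hylt.trans_le hx.2).le⟩ hylt.ne)
          apply ENNReal.ofReal_le_ofReal
          rw [hfx, abs_of_nonneg (sub_nonneg.2 h3), abs_of_nonneg (sub_nonneg.2 hylt.le)]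
          gcongr
        have htend : Filter.Tendsto (fun y => ENNReal.ofReal ((f x - f x') / (x - y)))
            (nhdsWithin x' (Set.Iio x'))
            (nhds (ENNReal.ofReal ((f x - f x') / (x - x')))) := by
          apply ENNReal.tendsto_ofReal
          exact Filter.Tendsto.div tendsto_const_nhds
            (tendsto_const_nhds.sub (Filter.tendsto_id.mono_left nhdsWithin_le_nhds))
            (sub_ne_zero_of_ne hlt.ne')
        have heq : ENNReal.ofReal (|f x - f x'| / |x - x'|)
            = ENNReal.ofReal ((f x - f x') / (x - x')) := by
          rw [abs_of_nonneg (sub_nonneg.2 hfle), abs_of_nonneg (sub_nonneg.2 hlt.le)]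
        rw [heq]
        refine le_of_tendsto htend ?_
        filter_upwards [Ioo_mem_nhdsLT_of_mem ⟨hx'0, le_refl x'⟩] with y hy
        exact key y hy
    · -- x < x' : pointwise domination
      have hA : f x' ≤ ftil x' := aux_le_rt hmono hlim ⟨hmem.1, hx'1⟩
      have hfle : f x ≤ f x' := hmono hx hmem hlt.le
      refine le_trans ?_ (term_le_locSlope ftil hmem hne)
      apply ENNReal.ofReal_le_ofReal
      rw [hfx, abs_sub_comm (f x), abs_sub_comm (f x),
        abs_of_nonneg (sub_nonneg.2 hfle), abs_of_nonneg (sub_nonneg.2 (hfle.trans hA))]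
      gcongr

lemma aux_countable (hmono : MonotoneOn f (Set.Icc 0 1))
    (hlim : ∀ x ∈ Set.Ico (0:ℝ) 1,
      Filter.Tendsto f (nhdsWithin x (Set.Ioi x)) (nhds (ftil x))) :
    Set.Countable {x ∈ Set.Ico (0:ℝ) 1 | f x < ftil x} := by
  have hsub : {x ∈ Set.Ico (0:ℝ) 1 | f x < ftil x} ⊆
      ⋃ q : ℚ, {x ∈ Set.Ico (0:ℝ) 1 | f x < (q:ℝ) ∧ (q:ℝ) < ftil x} := by
    rintro x ⟨hx, hlt⟩
    obtain ⟨q, hq1, hq2⟩ := exists_rat_btwn hlt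
    exact Set.mem_iUnion.2 ⟨q, hx, hq1, hq2⟩
  refine Set.Countable.mono hsub (Set.countable_iUnion fun q => Set.Subsingleton.countable ?_)
  rintro a ⟨ha, hfa, hta⟩ b ⟨hb, hfb, htb⟩
  by_contra hab
  rcases lt_or_gt_of_ne hab with h | h
  · have := aux_rt_le hmono hlim ha h hb.2.le
    linarith
  · have := aux_rt_le hmono hlim hb h ha.2.le
    linarith

end Aux

/-- For a nondecreasing `f : [0,1] → ℝ` right-continuous at `0`, its right-continuous
modification `f̃` (the right limit at every `x < 1`, and `f̃(1) = f(1)`) satisfies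
`V(f̃) = V(f)`, `Λ_{f̃} = Λ_f` at every point of right-continuity of `f`, and
`‖f̃‖_w = ‖f‖_w`. -/
theorem rc_modification_properties (f : ℝ → ℝ) (hmono : MonotoneOn f (Set.Icc 0 1))
    (h0 : ContinuousWithinAt f (Set.Icc (0:ℝ) 1) 0)
    (ftil : ℝ → ℝ)
    (hlim : ∀ x ∈ Set.Ico (0:ℝ) 1,
      Filter.Tendsto f (nhdsWithin x (Set.Ioi x)) (nhds (ftil x)))
    (h1 : ftil 1 = f 1) :
    totalVar ftil = totalVar f ∧
    (∀ x ∈ Set.Icc (0:ℝ) 1, ContinuousWithinAt f (Set.Icc x 1) x →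
      locSlope ftil x = locSlope f x) ∧
    weakNorm ftil = weakNorm f := by
  have hmono' : MonotoneOn ftil (Set.Icc 0 1) := aux_mono hmono hlim h1
  have h00 : ftil 0 = f 0 := aux_rc_eq hlim h1 ⟨le_rfl, zero_le_one⟩ h0
  refine ⟨?_, fun x hx hc => aux_slope_eq hmono h0 hlim h1 hx hc, ?_⟩
  · rw [totalVar, totalVar, aux_monoVar hmono, aux_monoVar hmono', h1, h00]
  · -- weak norms
    set N : Set ℝ := {x ∈ Set.Ico (0:ℝ) 1 | f x < ftil x} with hN
    have hNnull : volume N = 0 :=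
      (aux_countable hmono hlim).measure_zero _
    have hslope : ∀ x ∈ Set.Icc (0:ℝ) 1, x ∉ N → locSlope ftil x = locSlope f x := by
      intro x hx hxN
      rcases eq_or_lt_of_le hx.2 with rfl | hlt1
      · exact aux_slope_eq hmono h0 hlim h1 hx
          (by rw [Set.Icc_self]; exact continuousWithinAt_singleton)
      · have hle : ftil x ≤ f x := by
          by_contra hgt
          exact hxN ⟨⟨hx.1, hlt1⟩, lt_of_not_ge hgt⟩
        have heq : ftil x = f x :=
          le_antisymm hle (aux_le_rt hmono hlim ⟨hx.1, hlt1⟩)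
        exact aux_slope_eq hmono h0 hlim h1 hx (aux_rc_of_eq hlim ⟨hx.1, hlt1⟩ heq)
    unfold weakNorm
    refine iSup_congr fun t => iSup_congr fun ht => ?_
    congr 1
    set A := {x ∈ Set.Icc (0:ℝ) 1 | ENNReal.ofReal t ≤ locSlope ftil x}
    set B := {x ∈ Set.Icc (0:ℝ) 1 | ENNReal.ofReal t ≤ locSlope f x}
    have hAB : A ⊆ B ∪ N := by
      rintro x ⟨hx1, hx2⟩
      by_cases hxN : x ∈ N
      · exact Or.inr hxN
      · exact Or.inl ⟨hx1, by rwa [hslope x hx1 hxN] at hx2⟩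
    have hBA : B ⊆ A ∪ N := by
      rintro x ⟨hx1, hx2⟩
      by_cases hxN : x ∈ N
      · exact Or.inr hxN
      · exact Or.inl ⟨hx1, by rwa [hslope x hx1 hxN]⟩
    apply le_antisymm
    · calc volume A ≤ volume (B ∪ N) := measure_mono hAB
        _ ≤ volume B + volume N := measure_union_le _ _
        _ = volume B := by rw [hNnull, add_zero]
    · calc volume B ≤ volume (A ∪ N) := measure_mono hBA
        _ ≤ volume A + volume N := measure_union_le _ _
        _ = volume A := by rw [hNnull, add_zero]
end

section
/- Let f : [0,1] → ℝ be the piecewise linear function determined by f(1/n) = Σ_{k=1}^n (−1)^{k+1}/k for every integer n ≥ 1, extended linearly between consecutive points 1/(n+1) and 1/n, with f(0) = 0. Then V(f) = ∞ and ‖f‖_w ≤ 2; moreover for every t > 0, {x ∈ [0,1] : Λ_f(x) ≥ t} ⊆ [0, 2/t]. -/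
/- Auxiliary lemmas -/

noncomputable def ahS (n : ℕ) : ℝ := ∑ k ∈ Finset.Icc 1 n, (-1 : ℝ) ^ (k + 1) / (k : ℝ)

lemma ahS_succ (n : ℕ) : ahS (n+1) = ahS n + (-1:ℝ)^(n+2) / (n+1) := by
  unfold ahS
  rw [Finset.sum_Icc_succ_top (by omega)]
  norm_num

lemma ahS_one : ahS 1 = 1 := by simp [ahS]

lemma ahS_even_lb : ∀ m : ℕ, 1 ≤ m → 1/2 ≤ ahS (2*m) := by
  intro m hm
  induction m with
  | zero => omega
  | succ m ih =>
    rcases Nat.eq_or_lt_of_le hm with h | h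
    · have : 2 * 1 = 2 := by norm_num
      simp only [← h]
      rw [show 2*1 = 1+1 from rfl, ahS_succ, ahS_one]
      norm_num
    · have hm1 : 1 ≤ m := by omega
      have h1 : ahS (2*(m+1)) = ahS (2*m) + (-1:ℝ)^(2*m+2)/(2*m+1) + (-1:ℝ)^(2*m+3)/(2*m+2) := by
        have e1 := ahS_succ (2*m)
        have e2 := ahS_succ (2*m+1)
        rw [show 2*(m+1) = 2*m+1+1 from by ring, e2, e1]
        push_cast; ring
      have hpe : (-1:ℝ)^(2*m+2) = 1 := by rw [show 2*m+2=2*(m+1) from by ring, pow_mul]; norm_num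
      have hpo : (-1:ℝ)^(2*m+3) = -1 := by rw [show 2*m+3=2*(m+1)+1 from by ring, pow_succ, pow_mul]; norm_num
      rw [h1, hpe, hpo, neg_div]
      have h2 : (0:ℝ) < 2*m+1 := by positivity
      have h3 : (0:ℝ) < 2*m+2 := by positivity
      have : (1:ℝ)/(2*m+2) ≤ 1/(2*m+1) := by
        apply one_div_le_one_div_of_le h2; linarith
      have := ih hm1
      push_cast at *
      linarith

lemma ahS_odd_ub : ∀ m : ℕ, ahS (2*m+1) ≤ 1 := by
  intro m
  induction m with
  | zero => simp [ahS_one]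
  | succ m ih =>
    have h1 : ahS (2*(m+1)+1) = ahS (2*m+1) + (-1:ℝ)^(2*m+3)/(2*m+2) + (-1:ℝ)^(2*m+4)/(2*m+3) := by
      have e1 := ahS_succ (2*m+1)
      have e2 := ahS_succ (2*m+2)
      rw [show 2*(m+1)+1 = 2*m+2+1 from by ring, e2, e1]
      push_cast; ring
    have hpe : (-1:ℝ)^(2*m+4) = 1 := by rw [show 2*m+4=2*(m+2) from by ring, pow_mul]; norm_num
    have hpo : (-1:ℝ)^(2*m+3) = -1 := by rw [show 2*m+3=2*(m+1)+1 from by ring, pow_succ, pow_mul]; norm_num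
    rw [h1, hpe, hpo, neg_div]
    have h2 : (0:ℝ) < 2*m+2 := by positivity
    have : (1:ℝ)/(2*m+3) ≤ 1/(2*m+2) := by
      apply one_div_le_one_div_of_le h2; linarith
    linarith

lemma ahS_bounds (n : ℕ) (hn : 1 ≤ n) : 1/2 ≤ ahS n ∧ ahS n ≤ 1 := by
  rcases Nat.even_or_odd n with ⟨m, hm⟩ | ⟨m, hm⟩
  · have hm1 : 1 ≤ m := by omega
    have hlb := ahS_even_lb m hm1
    have hub := ahS_odd_ub m
    have e := ahS_succ (2*m)
    have hpe : (-1:ℝ)^(2*m+2) = 1 := by rw [show 2*m+2=2*(m+1) from by ring, pow_mul]; norm_num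
    rw [hpe] at e
    have h2 : (0:ℝ) < 2*m+1 := by positivity
    have : (0:ℝ) < 1/(2*m+1) := by positivity
    constructor
    · rw [show n = 2*m from by omega]; exact hlb
    · rw [show n = 2*m from by omega]
      have : ahS (2*m) = ahS (2*m+1) - 1/(2*m+1) := by rw [e]; push_cast; ring
      rw [this]; push_cast at *; linarith
  · have hlb := ahS_even_lb
    have hub := ahS_odd_ub m
    have e := ahS_succ (2*m)
    have hpe : (-1:ℝ)^(2*m+2) = 1 := by rw [show 2*m+2=2*(m+1) from by ring, pow_mul]; norm_num
    rw [hpe] at e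
    have h2 : (0:ℝ) < 2*m+1 := by positivity
    have hpos : (0:ℝ) < 1/(2*m+1) := by positivity
    constructor
    · rw [show n = 2*m+1 from by omega]
      rcases Nat.eq_zero_or_pos m with h | h
      · subst h; simp [ahS_one]; norm_num
      · have := hlb m h
        rw [e]; push_cast at *; linarith
    · rw [show n = 2*m+1 from by omega]; exact hub



open MeasureTheory Set ENNReal

section
variable (f : ℝ → ℝ) (hf0 : f 0 = 0)
    (hval : ∀ n : ℕ, 1 ≤ n →
      f (1 / (n : ℝ)) = ∑ k ∈ Finset.Icc 1 n, (-1 : ℝ) ^ (k + 1) / (k : ℝ))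
    (hlin : ∀ n : ℕ, 1 ≤ n → ∃ c d : ℝ,
      ∀ x ∈ Set.Icc (1 / ((n : ℝ) + 1)) (1 / (n : ℝ)), f x = c * x + d)

include hval hlin in
lemma piece_lip (n : ℕ) (hn : 1 ≤ n) :
    ∀ x ∈ Icc (1/((n:ℝ)+1)) (1/(n:ℝ)), ∀ y ∈ Icc (1/((n:ℝ)+1)) (1/(n:ℝ)),
      |f y - f x| ≤ n * |y - x| := by
  obtain ⟨c, d, hcd⟩ := hlin n hn
  have hn0 : (0:ℝ) < n := by exact_mod_cast hn
  have hn1 : (0:ℝ) < (n:ℝ)+1 := by positivity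
  have hle : 1/((n:ℝ)+1) ≤ 1/(n:ℝ) := by
    apply one_div_le_one_div_of_le hn0; linarith
  have hA : f (1/((n:ℝ)+1)) = c * (1/((n:ℝ)+1)) + d :=
    hcd _ ⟨le_refl _, hle⟩
  have hB : f (1/(n:ℝ)) = c * (1/(n:ℝ)) + d := hcd _ ⟨hle, le_refl _⟩
  have hdiff : f (1/(n:ℝ)) - f (1/((n:ℝ)+1)) = c * (1/(n:ℝ) - 1/((n:ℝ)+1)) := by
    rw [hA, hB]; ring
  have hvn := hval n hn
  have hvn1 := hval (n+1) (by omega)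
  have hfd : f (1/((n:ℝ)+1)) - f (1/(n:ℝ)) = (-1:ℝ)^(n+2)/((n:ℝ)+1) := by
    have h : f (1/((n:ℝ)+1)) = ahS (n+1) := by
      rw [show ((n:ℝ)+1) = (((n+1) : ℕ):ℝ) from by push_cast; ring]; exact hvn1
    rw [h, hvn, show (∑ k ∈ Finset.Icc 1 n, (-1 : ℝ) ^ (k + 1) / (k : ℝ)) = ahS n from rfl,
      ahS_succ]
    ring
  have hgap : 1/(n:ℝ) - 1/((n:ℝ)+1) = 1/((n:ℝ)*((n:ℝ)+1)) := by
    rw [div_sub_div _ _ (ne_of_gt hn0) (ne_of_gt hn1)]; ring_nf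
  have hc : |c| = n := by
    have hpos : (0:ℝ) < 1/((n:ℝ)*((n:ℝ)+1)) := by
      apply div_pos one_pos; positivity
    have h1 : |f (1/(n:ℝ)) - f (1/((n:ℝ)+1))| = 1/((n:ℝ)+1) := by
      rw [show f (1/(n:ℝ)) - f (1/((n:ℝ)+1)) = -(f (1/((n:ℝ)+1)) - f (1/(n:ℝ))) from by ring,
        abs_neg, hfd, abs_div, abs_pow, abs_neg, abs_one, one_pow, abs_of_pos hn1]
    rw [hdiff, abs_mul, hgap, abs_of_pos hpos] at h1
    have h2 : ((n:ℝ)*((n:ℝ)+1)) ≠ 0 := by positivity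
    field_simp at h1
    exact h1
  intro x hx y hy
  rw [hcd x hx, hcd y hy, show c*y+d - (c*x+d) = c * (y-x) from by ring, abs_mul, hc]

include hval hlin in
lemma glob_lip : ∀ n : ℕ, 1 ≤ n → ∀ x y : ℝ, 1/((n:ℝ)+1) ≤ x → x ≤ y → y ≤ 1 →
    |f y - f x| ≤ n * (y - x) := by
  intro n
  induction n with
  | zero => omega
  | succ n ih =>
    intro _ x y hx hxy hy1
    rcases Nat.eq_zero_or_pos n with rfl | hn
    · -- base case n+1 = 1
      have := piece_lip f hval hlin 1 le_rfl x ⟨by norm_num at hx ⊢; linarith, by norm_num; linarith⟩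
        y ⟨by norm_num at hx ⊢; linarith, by norm_num; linarith⟩
      rw [abs_of_nonneg (show (0:ℝ) ≤ y - x by linarith)] at this
      push_cast at this ⊢
      linarith
    · have hn' : (1:ℝ) ≤ n := by exact_mod_cast hn
      have hnn : (0:ℝ) < n := by linarith
      have key : ((n:ℝ)+1+1) = ((n:ℝ)+1)+1 := by ring
      rcases le_or_gt (1/((n:ℝ)+1)) x with hcase | hcase
      · have := ih hn x y hcase hxy hy1
        have : |f y - f x| ≤ (n:ℝ) * (y - x) := this
        push_cast
        nlinarith
      · have hx2 : 1/((n:ℝ)+1+1) ≤ x := by push_cast at hx; linarith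
        rcases le_or_gt y (1/((n:ℝ)+1)) with hcy | hcy
        · -- both in piece n+1
          have hp := piece_lip f hval hlin (n+1) (by omega) x
            ⟨by push_cast; push_cast at hx; linarith, by push_cast; linarith⟩
            y ⟨by push_cast; linarith [hx2, hxy], by push_cast; linarith⟩
          rw [abs_of_nonneg (show (0:ℝ) ≤ y - x by linarith)] at hp
          push_cast at hp ⊢
          linarith
        · set m := 1/((n:ℝ)+1) with hm
          have hm1 : m ≤ 1 := by
            rw [hm]; rw [div_le_one (by linarith)]; linarith
          have hp := piece_lip f hval hlin (n+1) (by omega) x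
            ⟨by push_cast; push_cast at hx; linarith, by push_cast; linarith⟩
            m ⟨by push_cast; rw [hm]; apply one_div_le_one_div_of_le <;> linarith,
              by push_cast; rw [hm]⟩
          rw [abs_of_nonneg (show (0:ℝ) ≤ m - x by linarith)] at hp
          have hq := ih hn m y le_rfl (le_of_lt hcy) hy1
          calc |f y - f x| ≤ |f y - f m| + |f m - f x| := by
                have : f y - f x = (f y - f m) + (f m - f x) := by ring
                rw [this]; exact abs_add_le _ _
            _ ≤ (n:ℝ) * (y - m) + ((n:ℕ)+1 : ℕ) * (m - x) := by push_cast at hp ⊢; linarith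
            _ ≤ ((n+1 : ℕ):ℝ) * (y - x) := by push_cast; nlinarith

lemma mem_piece (x : ℝ) (hx0 : 0 < x) (hx1 : x ≤ 1) :
    ∃ n : ℕ, 1 ≤ n ∧ (n:ℝ) ≤ 1/x ∧ 1/((n:ℝ)+1) < x ∧ x ≤ 1/(n:ℝ) := by
  have hinv : (1:ℝ) ≤ 1/x := by rw [le_div_iff₀ hx0]; linarith
  refine ⟨⌊1/x⌋₊, ?_, ?_, ?_, ?_⟩
  · exact_mod_cast Nat.le_floor (by exact_mod_cast hinv)
  · exact Nat.floor_le (by linarith)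
  · have h := Nat.lt_floor_add_one (1/x)
    rw [div_lt_iff₀ (by positivity)]
    rw [div_lt_iff₀ hx0] at h
    linarith
  · have h : (⌊1/x⌋₊ : ℝ) ≤ 1/x := Nat.floor_le (by linarith)
    have hn : (0:ℝ) < ⌊1/x⌋₊ := by
      have : (1:ℕ) ≤ ⌊1/x⌋₊ := Nat.le_floor (by exact_mod_cast hinv)
      exact_mod_cast this
    rw [le_div_iff₀ hn]
    calc (x : ℝ) * ⌊1/x⌋₊ ≤ x * (1/x) := by nlinarith
      _ = 1 := by field_simp

include hf0 hval hlin in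
lemma f_range (x : ℝ) (hx0 : 0 ≤ x) (hx1 : x ≤ 1) : 0 ≤ f x ∧ f x ≤ 1 := by
  rcases eq_or_lt_of_le hx0 with rfl | hx0'
  · rw [hf0]; norm_num
  obtain ⟨n, hn1, hninv, hlow, hhigh⟩ := mem_piece x hx0' hx1
  obtain ⟨c, d, hcd⟩ := hlin n hn1
  have hmem : x ∈ Icc (1/((n:ℝ)+1)) (1/(n:ℝ)) := ⟨le_of_lt hlow, hhigh⟩
  have hn0 : (0:ℝ) < n := by exact_mod_cast hn1
  have hle : 1/((n:ℝ)+1) ≤ 1/(n:ℝ) := by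
    apply one_div_le_one_div_of_le hn0; linarith
  have hA : f (1/((n:ℝ)+1)) = c * (1/((n:ℝ)+1)) + d := hcd _ ⟨le_refl _, hle⟩
  have hB : f (1/(n:ℝ)) = c * (1/(n:ℝ)) + d := hcd _ ⟨hle, le_refl _⟩
  have hX : f x = c * x + d := hcd _ hmem
  have hvA : f (1/((n:ℝ)+1)) = ahS (n+1) := by
    rw [show ((n:ℝ)+1) = (((n+1) : ℕ):ℝ) from by push_cast; ring]; exact hval (n+1) (by omega)
  have hvB : f (1/(n:ℝ)) = ahS n := hval n hn1
  have hbA := ahS_bounds (n+1) (by omega)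
  have hbB := ahS_bounds n hn1
  rw [hvA] at hA
  rw [hvB] at hB
  rcases le_or_gt 0 c with hc | hc
  · have h1 : c * (1/((n:ℝ)+1)) ≤ c * x := by
      apply mul_le_mul_of_nonneg_left hmem.1 hc
    have h2 : c * x ≤ c * (1/(n:ℝ)) := by
      apply mul_le_mul_of_nonneg_left hmem.2 hc
    constructor <;> [linarith; linarith]
  · have h1 : c * x ≤ c * (1/((n:ℝ)+1)) := by
      apply mul_le_mul_of_nonpos_left hmem.1 (le_of_lt hc)
    have h2 : c * (1/(n:ℝ)) ≤ c * x := by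
      apply mul_le_mul_of_nonpos_left hmem.2 (le_of_lt hc)
    constructor <;> [linarith; linarith]

include hf0 hval hlin in
lemma slope_bound (x : ℝ) (hx0 : 0 < x) (hx1 : x ≤ 1) (x' : ℝ) (hx' : x' ∈ Icc (0:ℝ) 1)
    (hne : x' ≠ x) : |f x - f x'| / |x - x'| ≤ 2 / x := by
  obtain ⟨n, hn1, hninv, hlow, hhigh⟩ := mem_piece x hx0 hx1
  have hn0 : (0:ℝ) < n := by exact_mod_cast hn1
  rcases lt_or_gt_of_ne hne with hlt | hgt
  · -- x' < x
    have hxx : 0 < x - x' := by linarith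
    have habs : |x - x'| = x - x' := abs_of_pos hxx
    rcases le_or_gt (x/2) x' with hhalf | hhalf
    · -- x/2 ≤ x' < x : use glob_lip at x'
      have hx'0 : 0 < x' := by linarith
      obtain ⟨m, hm1, hminv, hmlow, hmhigh⟩ := mem_piece x' hx'0 hx'.2
      have hg := glob_lip f hval hlin m hm1 x' x (le_of_lt hmlow) (le_of_lt hlt) hx1
      have hmx : (m:ℝ) ≤ 2/x := by
        calc (m:ℝ) ≤ 1/x' := hminv
          _ ≤ 2/x := by rw [div_le_div_iff₀ hx'0 hx0]; linarith
      rw [habs, div_le_div_iff₀ hxx hx0]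
      calc |f x - f x'| * x ≤ ((m:ℝ) * (x - x')) * x :=
            mul_le_mul_of_nonneg_right hg hx0.le
        _ = (m:ℝ) * ((x - x') * x) := by ring
        _ ≤ (2/x) * ((x - x') * x) :=
            mul_le_mul_of_nonneg_right hmx (by positivity)
        _ = 2 * (x - x') := by field_simp
    · -- x' < x/2
      have hr1 := f_range f hf0 hval hlin x (le_of_lt hx0) hx1
      have hr2 := f_range f hf0 hval hlin x' hx'.1 hx'.2
      have hd : |f x - f x'| ≤ 1 := by
        rw [abs_le]; constructor <;> linarith
      rw [habs, div_le_div_iff₀ hxx hx0]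
      nlinarith
  · -- x < x'
    have hxx : 0 < x' - x := by linarith
    have hg := glob_lip f hval hlin n hn1 x x' (le_of_lt hlow) (le_of_lt hgt) hx'.2
    have hnx : (n:ℝ) ≤ 2/x := by
      calc (n:ℝ) ≤ 1/x := hninv
        _ ≤ 2/x := by rw [div_le_div_iff₀ hx0 hx0]; nlinarith
    have habs : |x - x'| = x' - x := by rw [abs_sub_comm]; exact abs_of_pos hxx
    rw [habs, abs_sub_comm, div_le_div_iff₀ hxx hx0]
    calc |f x' - f x| * x ≤ ((n:ℝ) * (x' - x)) * x :=
          mul_le_mul_of_nonneg_right hg hx0.le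
      _ = (n:ℝ) * ((x' - x) * x) := by ring
      _ ≤ (2/x) * ((x' - x) * x) :=
          mul_le_mul_of_nonneg_right hnx (by positivity)
      _ = 2 * (x' - x) := by field_simp

include hf0 hval hlin in
lemma locSlope_le (x : ℝ) (hx0 : 0 < x) (hx1 : x ≤ 1) :
    locSlope f x ≤ ENNReal.ofReal (2/x) := by
  unfold locSlope
  refine iSup_le fun x' => iSup_le fun hx' => iSup_le fun hne => ?_
  exact ENNReal.ofReal_le_ofReal (slope_bound f hf0 hval hlin x hx0 hx1 x' hx' hne)

include hf0 hval hlin in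
lemma part3 (t : ℝ) (ht : 0 < t) :
    {x ∈ Set.Icc (0:ℝ) 1 | ENNReal.ofReal t ≤ locSlope f x} ⊆ Set.Icc 0 (2 / t) := by
  rintro x ⟨hx, hsl⟩
  refine ⟨hx.1, ?_⟩
  rcases eq_or_lt_of_le hx.1 with rfl | hx0
  · positivity
  have h1 := le_trans hsl (locSlope_le f hf0 hval hlin x hx0 hx.2)
  rw [ENNReal.ofReal_le_ofReal_iff (by positivity)] at h1
  rw [le_div_iff₀ hx0] at h1
  rw [le_div_iff₀ ht]
  nlinarith

include hf0 hval hlin in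
lemma part2 :
    (⨆ (t : ℝ) (_ : 0 < t),
      ENNReal.ofReal t * volume {x ∈ Set.Icc (0:ℝ) 1 | ENNReal.ofReal t ≤ locSlope f x}) ≤ 2 := by
  refine iSup_le fun t => iSup_le fun ht => ?_
  have hv : volume {x ∈ Set.Icc (0:ℝ) 1 | ENNReal.ofReal t ≤ locSlope f x}
      ≤ ENNReal.ofReal (2/t) := by
    calc volume {x ∈ Set.Icc (0:ℝ) 1 | ENNReal.ofReal t ≤ locSlope f x}
        ≤ volume (Set.Icc 0 (2/t)) := measure_mono (part3 f hf0 hval hlin t ht)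
      _ = ENNReal.ofReal (2/t - 0) := Real.volume_Icc
      _ = ENNReal.ofReal (2/t) := by norm_num
  calc ENNReal.ofReal t * volume {x ∈ Set.Icc (0:ℝ) 1 | ENNReal.ofReal t ≤ locSlope f x}
      ≤ ENNReal.ofReal t * ENNReal.ofReal (2/t) := by
        exact mul_le_mul_right hv _
    _ = ENNReal.ofReal (t * (2/t)) := (ENNReal.ofReal_mul ht.le).symm
    _ = ENNReal.ofReal 2 := by rw [mul_div_cancel₀]; exact ne_of_gt ht
    _ = 2 := by norm_num

include hval in
lemma node_gap (n : ℕ) (hn : 1 ≤ n) : |f (1/((n:ℝ)+1)) - f (1/(n:ℝ))| = 1/((n:ℝ)+1) := by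
  have hvn : f (1/(n:ℝ)) = ahS n := hval n hn
  have hvn1 : f (1/((n:ℝ)+1)) = ahS (n+1) := by
    rw [show ((n:ℝ)+1) = (((n+1) : ℕ):ℝ) from by push_cast; ring]; exact hval (n+1) (by omega)
  rw [hvn, hvn1, ahS_succ, show ahS n + (-1:ℝ)^(n+2)/(↑n+1) - ahS n = (-1:ℝ)^(n+2)/(↑n+1) from by ring,
    abs_div, abs_pow, abs_neg, abs_one, one_pow, abs_of_pos (by positivity)]

include hval in
lemma part1_s11 : eVariationOn f (Set.Icc 0 1) = ⊤ := by
  by_contra h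
  have hlt : eVariationOn f (Set.Icc 0 1) < ⊤ := lt_top_iff_ne_top.mpr h
  set C := (eVariationOn f (Set.Icc 0 1)).toReal with hC
  have key : ∀ N : ℕ, (1/2) * ∑ i ∈ Finset.range N, (1/((i:ℝ)+1)) ≤ C := by
    intro N
    -- the partition u i = 1 / (N + 1 - min i N)
    set u : ℕ → ℝ := fun i => 1/(((N+1 - min i N : ℕ)):ℝ) with hu
    have hpos : ∀ i, (0:ℕ) < N+1 - min i N := by intro i; omega
    have humono : Monotone u := by
      intro i j hij
      have h1 : N+1 - min j N ≤ N+1 - min i N := by omega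
      have h2 : (0:ℝ) < ((N+1 - min j N : ℕ):ℝ) := by exact_mod_cast hpos j
      apply one_div_le_one_div_of_le h2
      exact_mod_cast h1
    have humem : ∀ i, u i ∈ Set.Icc (0:ℝ) 1 := by
      intro i
      have h2 : (1:ℕ) ≤ N+1 - min i N := by omega
      have h2' : (1:ℝ) ≤ ((N+1 - min i N : ℕ):ℝ) := by exact_mod_cast h2
      constructor
      · positivity
      · rw [div_le_one (by linarith)]; linarith
    have hsum := eVariationOn.sum_le (f := f) (n := N) humono humem
    have hterm : ∀ i ∈ Finset.range N,
        edist (f (u (i+1))) (f (u i)) = ENNReal.ofReal ((((N-i:ℕ):ℝ)+1)⁻¹) := by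
      intro i hi
      rw [Finset.mem_range] at hi
      have e1 : u (i+1) = 1/((N-i : ℕ):ℝ) := by
        simp only [hu]
        rw [show (N+1 - min (i+1) N : ℕ) = N - i from by omega]
      have e2 : u i = 1/(((N-i : ℕ):ℝ)+1) := by
        simp only [hu]
        rw [show (N+1 - min i N : ℕ) = (N-i) + 1 from by omega]
        push_cast; ring_nf
      rw [e1, e2, edist_dist, Real.dist_eq, abs_sub_comm,
        node_gap f hval (N-i) (by omega), one_div]
    have hsum2 : ENNReal.ofReal (∑ i ∈ Finset.range N, (((N-i:ℕ):ℝ)+1)⁻¹)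
        ≤ eVariationOn f (Set.Icc 0 1) := by
      rw [ENNReal.ofReal_sum_of_nonneg (fun i _ => by positivity)]
      calc ∑ i ∈ Finset.range N, ENNReal.ofReal ((((N-i:ℕ):ℝ)+1)⁻¹)
          = ∑ i ∈ Finset.range N, edist (f (u (i+1))) (f (u i)) :=
            (Finset.sum_congr rfl hterm).symm
        _ ≤ _ := hsum
    have hreflect : ∑ i ∈ Finset.range N, (((N-i:ℕ):ℝ)+1)⁻¹
        = ∑ i ∈ Finset.range N, (((i:ℝ)+2))⁻¹ := by
      rw [← Finset.sum_range_reflect]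
      apply Finset.sum_congr rfl
      intro i hi
      rw [Finset.mem_range] at hi
      rw [show (N - (N-1-i) : ℕ) = i+1 from by omega]
      push_cast; ring_nf
    have hcompare : (1/2) * ∑ i ∈ Finset.range N, (1/((i:ℝ)+1))
        ≤ ∑ i ∈ Finset.range N, (((i:ℝ)+2))⁻¹ := by
      rw [Finset.mul_sum]
      apply Finset.sum_le_sum
      intro i _
      have h1 : (0:ℝ) < (i:ℝ)+1 := by positivity
      have h2 : (0:ℝ) < (i:ℝ)+2 := by positivity
      have heq : 1/2*(1/((i:ℝ)+1)) = 1/(2*((i:ℝ)+1)) := by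
        rw [one_div, one_div, one_div, mul_inv, mul_comm]
      rw [heq, inv_eq_one_div]
      apply one_div_le_one_div_of_le h2
      linarith
    have hle : ∑ i ∈ Finset.range N, (((N-i:ℕ):ℝ)+1)⁻¹ ≤ C := by
      rw [hC]
      exact (ENNReal.ofReal_le_iff_le_toReal h).mp hsum2
    rw [hreflect] at hle
    linarith
  obtain ⟨N, hN⟩ := (Filter.tendsto_atTop.mp Real.tendsto_sum_range_one_div_nat_succ_atTop
    (2*C + 2)).exists
  have := key N
  linarith

end


/-- The piecewise linear function with `f(1/n) = Σ_{k=1}^n (−1)^{k+1}/k` and `f(0) = 0`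
has infinite variation, weak average smoothness at most `2`, and
`{x ∈ [0,1] : Λ_f(x) ≥ t} ⊆ [0, 2/t]` for every `t > 0`. -/
theorem alternating_harmonic_separation (f : ℝ → ℝ) (hf0 : f 0 = 0)
    (hval : ∀ n : ℕ, 1 ≤ n →
      f (1 / (n : ℝ)) = ∑ k ∈ Finset.Icc 1 n, (-1 : ℝ) ^ (k + 1) / (k : ℝ))
    (hlin : ∀ n : ℕ, 1 ≤ n → ∃ c d : ℝ,
      ∀ x ∈ Set.Icc (1 / ((n : ℝ) + 1)) (1 / (n : ℝ)), f x = c * x + d) :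
    totalVar f = ⊤ ∧ weakNorm f ≤ 2 ∧
    ∀ t : ℝ, 0 < t →
      {x ∈ Set.Icc (0:ℝ) 1 | ENNReal.ofReal t ≤ locSlope f x} ⊆ Set.Icc 0 (2 / t) := by
  refine ⟨part1_s11 f hval, ?_, fun t ht => part3 f hf0 hval hlin t ht⟩
  exact part2 f hf0 hval hlin
end

section
/- The function g : [0,1] → ℝ defined by g(0) = 0 and g(x) = x·sin(1/x) for x ∈ (0,1] satisfies V(g) = ∞ and ‖g‖_w < ∞. -/
open MeasureTheory Set ENNReal

noncomputable abbrev gfun : ℝ → ℝ := fun x : ℝ => x * Real.sin (1 / x)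

lemma gfun_abs_le (y : ℝ) : |gfun y| ≤ |y| := by
  rw [abs_mul]
  calc |y| * |Real.sin (1/y)| ≤ |y| * 1 := by
        gcongr; exact Real.abs_sin_le_one _
    _ = |y| := mul_one _

lemma gfun_hasDerivAt {y : ℝ} (hy : 0 < y) :
    HasDerivAt gfun (1 * Real.sin (1/y) + y * (Real.cos (1/y) * (-(y^2)⁻¹))) y := by
  have hinv : HasDerivAt (fun z : ℝ => 1/z) (-(y^2)⁻¹) y := by
    simpa [one_div] using hasDerivAt_inv hy.ne'
  have hsin : HasDerivAt (fun z : ℝ => Real.sin (1/z)) (Real.cos (1/y) * (-(y^2)⁻¹)) y :=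
    (Real.hasDerivAt_sin (1/y)).comp y hinv
  exact (hasDerivAt_id' (x := y)).mul hsin

lemma gfun_deriv_bound {x y : ℝ} (hx : 0 < x) (hy : x/2 ≤ y) :
    ‖1 * Real.sin (1/y) + y * (Real.cos (1/y) * (-(y^2)⁻¹))‖ ≤ 1 + 2/x := by
  have hy0 : 0 < y := lt_of_lt_of_le (by positivity) hy
  have h1 : |1 * Real.sin (1/y)| ≤ 1 := by
    rw [one_mul]; exact Real.abs_sin_le_one _
  have h2 : |y * (Real.cos (1/y) * (-(y^2)⁻¹))| ≤ 2/x := by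
    have : |y * (Real.cos (1/y) * (-(y^2)⁻¹))| = |Real.cos (1/y)| * (1/y) := by
      rw [abs_mul, abs_mul, abs_neg, abs_inv, abs_of_pos hy0, abs_of_pos (by positivity : (0:ℝ) < y^2)]
      field_simp
    rw [this]
    calc |Real.cos (1/y)| * (1/y) ≤ 1 * (1/y) := by
          gcongr; exact Real.abs_cos_le_one _
      _ = 1/y := one_mul _
      _ ≤ 2/x := by
          rw [div_le_div_iff₀ hy0 hx]
          linarith
  calc ‖1 * Real.sin (1/y) + y * (Real.cos (1/y) * (-(y^2)⁻¹))‖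
      ≤ |1 * Real.sin (1/y)| + |y * (Real.cos (1/y) * (-(y^2)⁻¹))| := abs_add_le _ _
    _ ≤ 1 + 2/x := add_le_add h1 h2

/-- The real slope bound. -/
lemma gfun_slope_le {x x' : ℝ} (hx : 0 < x) (hx1 : x ≤ 1) (hx' : x' ∈ Set.Icc (0:ℝ) 1)
    (hne : x' ≠ x) : |gfun x - gfun x'| / |x - x'| ≤ 3 / x := by
  obtain ⟨hx'0, hx'1⟩ := hx'
  rcases lt_or_ge x' (x/2) with h | h
  · -- far case
    have hd : x/2 ≤ |x - x'| := by
      rw [abs_of_pos (by linarith)]; linarith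
    have hnum : |gfun x - gfun x'| ≤ 3/2 * x := by
      calc |gfun x - gfun x'| ≤ |gfun x| + |gfun x'| := abs_sub _ _
        _ ≤ |x| + |x'| := add_le_add (gfun_abs_le x) (gfun_abs_le x')
        _ = x + x' := by rw [abs_of_pos hx, abs_of_nonneg hx'0]
        _ ≤ 3/2 * x := by linarith
    calc |gfun x - gfun x'| / |x - x'| ≤ (3/2 * x) / (x/2) :=
          div_le_div₀ (by positivity) hnum (by positivity) hd
      _ = 3 := by field_simp
      _ ≤ 3/x := by
          rw [le_div_iff₀ hx]; nlinarith
  · -- MVT case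
    have hxs : x ∈ Set.Icc (x/2) 1 := ⟨by linarith, hx1⟩
    have hx's : x' ∈ Set.Icc (x/2) 1 := ⟨h, hx'1⟩
    have hmvt := (convex_Icc (x/2) 1).norm_image_sub_le_of_norm_hasDerivWithin_le
      (f := gfun) (f' := fun y => 1 * Real.sin (1/y) + y * (Real.cos (1/y) * (-(y^2)⁻¹)))
      (fun y hy => (gfun_hasDerivAt (lt_of_lt_of_le (by positivity) hy.1)).hasDerivWithinAt)
      (fun y hy => gfun_deriv_bound hx hy.1) hx's hxs
    have habs : |gfun x - gfun x'| ≤ (1 + 2/x) * |x - x'| := by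
      have := hmvt
      rw [Real.norm_eq_abs, Real.norm_eq_abs] at this
      rwa [abs_sub_comm x x'] at this
    have hd : 0 < |x - x'| := abs_pos.2 (sub_ne_zero.2 (Ne.symm hne))
    rw [div_le_div_iff₀ hd hx] at *
    calc |gfun x - gfun x'| * x ≤ ((1 + 2/x) * |x - x'|) * x := by gcongr
      _ = (x + 2) * |x - x'| := by field_simp
      _ ≤ 3 * |x - x'| := by nlinarith [abs_nonneg (x - x')]

lemma locSlope_gfun_le {x : ℝ} (hx : 0 < x) (hx1 : x ≤ 1) :
    locSlope gfun x ≤ ENNReal.ofReal (3 / x) := by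
  apply iSup_le; intro x'; apply iSup_le; intro hx'; apply iSup_le; intro hne
  exact ENNReal.ofReal_le_ofReal (gfun_slope_le hx hx1 hx' hne)

lemma weakNorm_gfun_le : weakNorm gfun ≤ ENNReal.ofReal 3 := by
  apply iSup_le; intro t; apply iSup_le; intro ht
  have hsub : {x ∈ Set.Icc (0:ℝ) 1 | ENNReal.ofReal t ≤ locSlope gfun x}
      ⊆ Set.Icc (0:ℝ) (3/t) := by
    intro x ⟨⟨hx0, hx1⟩, hx⟩
    refine ⟨hx0, ?_⟩
    rcases eq_or_lt_of_le hx0 with h | h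
    · rw [← h]; positivity
    · have hle : ENNReal.ofReal t ≤ ENNReal.ofReal (3 / x) :=
        hx.trans (locSlope_gfun_le h hx1)
      have ht3 : t ≤ 3 / x := by
        rwa [ENNReal.ofReal_le_ofReal_iff (by positivity)] at hle
      rw [le_div_iff₀ h] at ht3
      rw [le_div_iff₀ ht]
      linarith [mul_comm t x]
  calc ENNReal.ofReal t * volume {x ∈ Set.Icc (0:ℝ) 1 | ENNReal.ofReal t ≤ locSlope gfun x}
      ≤ ENNReal.ofReal t * volume (Set.Icc (0:ℝ) (3/t)) := mul_le_mul_right (measure_mono hsub) _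
    _ = ENNReal.ofReal t * ENNReal.ofReal (3/t) := by rw [Real.volume_Icc, sub_zero]
    _ = ENNReal.ofReal (t * (3/t)) := (ENNReal.ofReal_mul ht.le).symm
    _ = ENNReal.ofReal 3 := by rw [mul_div_cancel₀ _ ht.ne']

noncomputable def aSeq (k : ℕ) : ℝ := 2 / ((2*k+1) * Real.pi)

lemma aSeq_pos (k : ℕ) : 0 < aSeq k := by
  unfold aSeq; positivity

lemma aSeq_le_one (k : ℕ) : aSeq k ≤ 1 := by
  unfold aSeq
  rw [div_le_one (by positivity)]
  have h1 : (1:ℝ) ≤ 2*k+1 := by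
    have : (0:ℝ) ≤ k := Nat.cast_nonneg k
    linarith
  nlinarith [Real.pi_gt_three]

lemma aSeq_anti : ∀ {k m : ℕ}, k ≤ m → aSeq m ≤ aSeq k := by
  intro k m h
  have hπ := Real.pi_pos
  have hc : (k:ℝ) ≤ m := Nat.cast_le.mpr h
  unfold aSeq
  rw [div_le_div_iff₀ (by positivity) (by positivity)]
  nlinarith

lemma gfun_aSeq (k : ℕ) : gfun (aSeq k) = (-1)^k * aSeq k := by
  have hπ := Real.pi_pos
  have h1 : 1 / aSeq k = Real.pi/2 + k * Real.pi := by
    unfold aSeq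
    field_simp
    ring
  show aSeq k * Real.sin (1 / aSeq k) = _
  rw [h1, Real.sin_add_nat_mul_pi, Real.sin_pi_div_two, mul_one]
  ring

lemma aSeq_lb (k : ℕ) : 1 / ((k+1) * Real.pi) ≤ aSeq k := by
  have hπ := Real.pi_pos
  unfold aSeq
  rw [div_le_div_iff₀ (by positivity) (by positivity)]
  have : (0:ℝ) ≤ k := by positivity
  nlinarith

lemma edist_gfun_aSeq (k : ℕ) :
    ENNReal.ofReal (1 / ((k+1) * Real.pi)) ≤ edist (gfun (aSeq k)) (gfun (aSeq (k+1))) := by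
  rw [edist_dist, Real.dist_eq, gfun_aSeq, gfun_aSeq]
  apply ENNReal.ofReal_le_ofReal
  have hp0 := (aSeq_pos k).le
  have hp1 := (aSeq_pos (k+1)).le
  have h : |(-1:ℝ)^k * aSeq k - (-1)^(k+1) * aSeq (k+1)| = aSeq k + aSeq (k+1) := by
    rw [pow_succ]
    rcases Nat.even_or_odd k with h | h
    · rw [h.neg_one_pow,
        show (1:ℝ)*aSeq k - 1*(-1)*aSeq (k+1) = aSeq k + aSeq (k+1) from by ring,
        abs_of_nonneg (by linarith)]
    · rw [h.neg_one_pow,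
        show (-1:ℝ)*aSeq k - (-1)*(-1)*aSeq (k+1) = -(aSeq k + aSeq (k+1)) from by ring,
        abs_neg, abs_of_nonneg (by linarith)]
  rw [h]
  have := aSeq_lb k
  have := (aSeq_pos (k+1)).le
  linarith

lemma totalVar_gfun : totalVar gfun = ⊤ := by
  apply ENNReal.eq_top_of_forall_nnreal_le
  intro r
  have hπ := Real.pi_pos
  -- find n with (1/π) * H n ≥ r
  obtain ⟨n, hn⟩ : ∃ n : ℕ, (r : ℝ) * Real.pi ≤ ∑ i ∈ Finset.range n, (1 / (i+1) : ℝ) := by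
    have := Real.tendsto_sum_range_one_div_nat_succ_atTop
    rcases (this.eventually_ge_atTop ((r:ℝ) * Real.pi)).exists with ⟨n, hn⟩
    exact ⟨n, hn⟩
  set u : ℕ → ℝ := fun i => aSeq (n - i) with hu_def
  have hu : Monotone u := by
    intro i j hij
    exact aSeq_anti (Nat.sub_le_sub_left hij n)
  have us : ∀ i, u i ∈ Set.Icc (0:ℝ) 1 := fun i => ⟨(aSeq_pos _).le, aSeq_le_one _⟩
  have key := eVariationOn.sum_le (f := gfun) (n := n) hu us
  refine le_trans ?_ key
  have hterm : ∀ i ∈ Finset.range n,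
      ENNReal.ofReal (1 / (((n - 1 - i : ℕ) + 1) * Real.pi)) ≤
        edist (gfun (u (i+1))) (gfun (u i)) := by
    intro i hi
    rw [Finset.mem_range] at hi
    have h1 : n - (i+1) = n - 1 - i := by omega
    have h2 : n - i = (n - 1 - i) + 1 := by omega
    rw [hu_def]
    simp only
    rw [h1, h2]
    exact edist_gfun_aSeq (n - 1 - i)
  calc (r : ℝ≥0∞) ≤ ENNReal.ofReal (∑ i ∈ Finset.range n, (1 / ((i+1) * Real.pi) : ℝ)) := by
        rw [← ENNReal.ofReal_coe_nnreal]
        apply ENNReal.ofReal_le_ofReal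
        have : ∑ i ∈ Finset.range n, (1 / ((i+1) * Real.pi) : ℝ)
            = (∑ i ∈ Finset.range n, (1 / (i+1) : ℝ)) / Real.pi := by
          rw [Finset.sum_div]
          congr 1; ext i
          rw [div_div]
        rw [this, le_div_iff₀ hπ]
        exact hn
    _ = ∑ i ∈ Finset.range n, ENNReal.ofReal (1 / ((i+1) * Real.pi) : ℝ) := by
        rw [ENNReal.ofReal_sum_of_nonneg]
        intro i _
        positivity
    _ = ∑ i ∈ Finset.range n, ENNReal.ofReal (1 / (((n - 1 - i : ℕ) + 1) * Real.pi) : ℝ) := by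
        rw [← Finset.sum_range_reflect]
    _ ≤ ∑ i ∈ Finset.range n, edist (gfun (u (i+1))) (gfun (u i)) :=
        Finset.sum_le_sum hterm

/-- `g(x) = x·sin(1/x)` (with `g(0) = 0`) has infinite variation but finite weak
average smoothness. -/
theorem x_sin_inv_x_properties :
    totalVar (fun x : ℝ => x * Real.sin (1 / x)) = ⊤ ∧
    weakNorm (fun x : ℝ => x * Real.sin (1 / x)) < ⊤ := by
  exact ⟨totalVar_gfun, lt_of_le_of_lt weakNorm_gfun_le ENNReal.ofReal_lt_top⟩
end

section
/- For every γ > 0 and every sequence y : ℕ → {−1, 1}, the function f : [0,1] → ℝ that is piecewise linear with f(2^{−n}) = y_n·γ for every integer n ≥ 0 (linear on each interval [2^{−(n+1)}, 2^{−n}]) and f(0) = 0 satisfies ‖f‖_w ≤ 6γ. -/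
open MeasureTheory Set ENNReal

/-- For `γ > 0` and any `±1`-sequence `y`, the piecewise linear function with
`f(2^{−n}) = y_n·γ` and `f(0) = 0` satisfies `‖f‖_w ≤ 6γ`. -/
theorem zigzag_weak_bound (γ : ℝ) (hγ : 0 < γ) (y : ℕ → ℝ)
    (hy : ∀ n, y n = 1 ∨ y n = -1) (f : ℝ → ℝ) (hf0 : f 0 = 0)
    (hval : ∀ n : ℕ, f ((1 / 2 : ℝ) ^ n) = y n * γ)
    (hlin : ∀ n : ℕ, ∃ c d : ℝ,
      ∀ x ∈ Set.Icc ((1 / 2 : ℝ) ^ (n + 1)) ((1 / 2 : ℝ) ^ n), f x = c * x + d) :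
    weakNorm f ≤ ENNReal.ofReal (6 * γ) := by
  classical
  have hhalf : ∀ k : ℕ, (0:ℝ) < (1/2:ℝ)^k := fun k => by positivity
  have hstep : ∀ k : ℕ, (1/2:ℝ)^(k+1) ≤ (1/2:ℝ)^k := by
    intro k; rw [pow_succ]; nlinarith [hhalf k]
  have hone : ∀ k : ℕ, (1/2:ℝ)^k ≤ 1 := by
    intro k
    induction k with
    | zero => norm_num
    | succ n ih => exact le_trans (hstep n) ih
  have hpowinv : ∀ k : ℕ, (2:ℝ)^k * (1/2:ℝ)^k = 1 := by
    intro k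
    rw [one_div, inv_pow, mul_inv_cancel₀ (pow_ne_zero _ two_ne_zero)]
  have hfpabs : ∀ n : ℕ, |f ((1/2:ℝ)^n)| = γ := by
    intro n
    rw [hval n, abs_mul, abs_of_pos hγ]
    rcases hy n with h | h <;> rw [h] <;> norm_num
  -- Lipschitz bound on each dyadic piece
  have hlip : ∀ k : ℕ, ∀ x ∈ Icc ((1/2:ℝ)^(k+1)) ((1/2:ℝ)^k),
      ∀ z ∈ Icc ((1/2:ℝ)^(k+1)) ((1/2:ℝ)^k),
      |f x - f z| ≤ γ * 2^(k+2) * |x - z| := by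
    intro k x hx z hz
    obtain ⟨c, d, hcd⟩ := hlin k
    have hmem1 : (1/2:ℝ)^(k+1) ∈ Icc ((1/2:ℝ)^(k+1)) ((1/2:ℝ)^k) := ⟨le_rfl, hstep k⟩
    have hmem2 : (1/2:ℝ)^k ∈ Icc ((1/2:ℝ)^(k+1)) ((1/2:ℝ)^k) := ⟨hstep k, le_rfl⟩
    have e1 : c * (1/2:ℝ)^(k+1) + d = y (k+1) * γ := by rw [← hcd _ hmem1, hval]
    have e2 : c * (1/2:ℝ)^k + d = y k * γ := by rw [← hcd _ hmem2, hval]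
    have hp : (1/2:ℝ)^k = 2 * (1/2:ℝ)^(k+1) := by rw [pow_succ]; ring
    rw [hp] at e2
    have e3 : c * (1/2:ℝ)^(k+1) = (y k - y (k+1)) * γ := by linear_combination e2 - e1
    have habs : |c| * (1/2:ℝ)^(k+1) = |y k - y (k+1)| * γ := by
      have := congrArg abs e3
      rwa [abs_mul, abs_mul, abs_of_pos (hhalf (k+1)), abs_of_pos hγ] at this
    have hy2 : |y k - y (k+1)| ≤ 2 := by
      rcases hy k with h | h <;> rcases hy (k+1) with h' | h' <;> rw [h, h'] <;> norm_num
    have h5 : γ * 2^(k+2) * (1/2:ℝ)^(k+1) = 2 * γ := by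
      have h2 : (2:ℝ)^(k+2) = 2 * 2^(k+1) := by rw [pow_succ]; ring
      rw [h2]; linear_combination 2 * γ * hpowinv (k+1)
    have hc : |c| ≤ γ * 2^(k+2) := by
      have h4 : |c| * (1/2:ℝ)^(k+1) ≤ γ * 2^(k+2) * (1/2:ℝ)^(k+1) := by
        rw [h5, habs]; nlinarith [hγ]
      exact le_of_mul_le_mul_right h4 (hhalf (k+1))
    rw [hcd x hx, hcd z hz, show c * x + d - (c * z + d) = c * (x - z) by ring, abs_mul]
    exact mul_le_mul_of_nonneg_right hc (abs_nonneg _)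
  -- Lipschitz bound on tails [2^{-(n+1)}, 1]
  have htail : ∀ n : ℕ, ∀ x z : ℝ, (1/2:ℝ)^(n+1) ≤ x → x ≤ 1 → (1/2:ℝ)^(n+1) ≤ z → z ≤ 1 →
      |f x - f z| ≤ γ * 2^(n+2) * |x - z| := by
    intro n
    induction n with
    | zero =>
      intro x z hx1 hx2 hz1 hz2
      exact hlip 0 x ⟨hx1, by simpa using hx2⟩ z ⟨hz1, by simpa using hz2⟩
    | succ n ih =>
      have hCge : γ * (2:ℝ)^(n+2) ≤ γ * 2^(n+3) := by
        have h23 : γ * (2:ℝ)^(n+3) = 2 * (γ * 2^(n+2)) := by rw [pow_succ]; ring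
        have hcpos : (0:ℝ) < γ * 2^(n+2) := by positivity
        linarith
      have main : ∀ x z : ℝ, (1/2:ℝ)^(n+2) ≤ x → z ≤ 1 → x ≤ z →
          |f x - f z| ≤ γ * 2^(n+3) * |x - z| := by
        intro x z hx1 hz2 hxz
        have hz1 : (1/2:ℝ)^(n+2) ≤ z := le_trans hx1 hxz
        have hx2 : x ≤ 1 := le_trans hxz hz2
        by_cases h1 : (1/2:ℝ)^(n+1) ≤ x
        · have h := ih x z h1 hx2 (le_trans h1 hxz) hz2
          have hCc := mul_le_mul_of_nonneg_right hCge (abs_nonneg (x - z))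
          linarith
        · push_neg at h1
          by_cases h2 : z ≤ (1/2:ℝ)^(n+1)
          · exact hlip (n+1) x ⟨hx1, h1.le⟩ z ⟨hz1, h2⟩
          · push_neg at h2
            have ha := hlip (n+1) x ⟨hx1, h1.le⟩ ((1/2:ℝ)^(n+1)) ⟨hstep (n+1), le_rfl⟩
            have hb := ih ((1/2:ℝ)^(n+1)) z le_rfl (hone (n+1)) h2.le hz2
            have hconv : γ * (2:ℝ)^(n+1+2) = γ * 2^(n+3) := rfl
            rw [hconv] at ha
            have tri := abs_sub_le (f x) (f ((1/2:ℝ)^(n+1))) (f z)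
            rw [abs_of_nonpos (by linarith : x - (1/2:ℝ)^(n+1) ≤ 0)] at ha
            rw [abs_of_nonpos (by linarith : (1/2:ℝ)^(n+1) - z ≤ 0)] at hb
            rw [abs_of_nonpos (by linarith : x - z ≤ 0)]
            have hgap := mul_le_mul_of_nonneg_right hCge
              (show (0:ℝ) ≤ z - (1/2:ℝ)^(n+1) by linarith)
            linarith
      intro x z hx1 hx2 hz1 hz2
      rcases le_total x z with h | h
      · exact main x z hx1 hz2 h
      · rw [abs_sub_comm (f x), abs_sub_comm x]
        exact main z x hz1 hx2 h
  -- locating a point in its dyadic interval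
  have hmem : ∀ x : ℝ, 0 < x → x ≤ 1 → ∃ n : ℕ, (1/2:ℝ)^(n+1) ≤ x ∧ x ≤ (1/2:ℝ)^n := by
    intro x hx0 hx1
    have hex : ∃ k : ℕ, (1/2:ℝ)^k < x := exists_pow_lt_of_lt_one hx0 (by norm_num)
    have hk := Nat.find_spec hex
    have hk0 : Nat.find hex ≠ 0 := by
      intro h
      rw [h] at hk
      norm_num at hk
      linarith
    obtain ⟨n, hn⟩ := Nat.exists_eq_succ_of_ne_zero hk0
    rw [hn] at hk
    refine ⟨n, hk.le, ?_⟩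
    by_contra hcon
    push_neg at hcon
    exact Nat.find_min hex (by omega : n < Nat.find hex) hcon
  -- global bound |f| ≤ γ on [0,1]
  have hbound : ∀ x : ℝ, 0 ≤ x → x ≤ 1 → |f x| ≤ γ := by
    intro x hx0 hx1
    rcases eq_or_lt_of_le hx0 with h | h
    · rw [← h, hf0]; simpa using hγ.le
    · obtain ⟨n, hn1, hn2⟩ := hmem x h hx1
      obtain ⟨c, d, hcd⟩ := hlin n
      have e1 : f ((1/2:ℝ)^(n+1)) = c * (1/2:ℝ)^(n+1) + d := hcd _ ⟨le_rfl, hstep n⟩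
      have e2 : f ((1/2:ℝ)^n) = c * (1/2:ℝ)^n + d := hcd _ ⟨hstep n, le_rfl⟩
      have ex : f x = c * x + d := hcd x ⟨hn1, hn2⟩
      have w1 : f ((1/2:ℝ)^(n+1)) = γ ∨ f ((1/2:ℝ)^(n+1)) = -γ := by
        rcases hy (n+1) with h' | h'
        · left; rw [hval, h']; ring
        · right; rw [hval, h']; ring
      have w2 : f ((1/2:ℝ)^n) = γ ∨ f ((1/2:ℝ)^n) = -γ := by
        rcases hy n with h' | h'
        · left; rw [hval, h']; ring
        · right; rw [hval, h']; ring
      rw [abs_le]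
      rcases le_total 0 c with hc | hc
      · have l1 : c * (1/2:ℝ)^(n+1) ≤ c * x := mul_le_mul_of_nonneg_left hn1 hc
        have l2 : c * x ≤ c * (1/2:ℝ)^n := mul_le_mul_of_nonneg_left hn2 hc
        rcases w1 with w1 | w1 <;> rcases w2 with w2 | w2 <;> constructor <;> linarith
      · have l1 : c * x ≤ c * (1/2:ℝ)^(n+1) := mul_le_mul_of_nonpos_left hn1 hc
        have l2 : c * (1/2:ℝ)^n ≤ c * x := mul_le_mul_of_nonpos_left hn2 hc
        rcases w1 with w1 | w1 <;> rcases w2 with w2 | w2 <;> constructor <;> linarith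
  -- the key pointwise slope bound: |f x - f z| * x ≤ 6γ |x - z|
  have hkey : ∀ n : ℕ, ∀ x z : ℝ, (1/2:ℝ)^(n+1) ≤ x → x ≤ (1/2:ℝ)^n →
      0 ≤ z → z ≤ 1 → |f x - f z| * x ≤ 6 * γ * |x - z| := by
    intro n x z hx1 hx2 hz0 hz1
    obtain ⟨L, hLdef⟩ : ∃ L : ℝ, L = (1/2:ℝ)^(n+2) := ⟨_, rfl⟩
    obtain ⟨s, hsdef⟩ : ∃ s : ℝ, s = γ * 2^(n+2) := ⟨_, rfl⟩
    have hL0 : 0 < L := by rw [hLdef]; positivity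
    have hs0 : 0 < s := by rw [hsdef]; positivity
    have hm2 : (1/2:ℝ)^(n+1) = 2 * L := by rw [hLdef, pow_succ]; ring
    have hpn : (1/2:ℝ)^n = 4 * L := by rw [hLdef, pow_succ, pow_succ]; ring
    have hsL : s * L = γ := by
      rw [hsdef, hLdef]; linear_combination γ * hpowinv (n+2)
    have hx1' : 2*L ≤ x := by rw [← hm2]; exact hx1
    have hx2' : x ≤ 4*L := by rw [← hpn]; exact hx2
    have hx0 : (0:ℝ) ≤ x := by linarith
    have hxle1 : x ≤ 1 := le_trans hx2 (hone n)
    by_cases hc1 : (1/2:ℝ)^(n+1) ≤ z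
    · have h := htail n x z hx1 hxle1 hc1 hz1
      rw [← hsdef] at h
      have h2 : s * x ≤ 4 * γ := by
        have := mul_le_mul_of_nonneg_left hx2' hs0.le
        linarith [hsL, this]
      have k1 := mul_le_mul_of_nonneg_right h hx0
      have k2 := mul_le_mul_of_nonneg_right h2 (abs_nonneg (x - z))
      have k3 : (0:ℝ) ≤ γ * |x - z| := mul_nonneg hγ.le (abs_nonneg (x - z))
      nlinarith [k1, k2, k3]
    · push_neg at hc1
      rw [hm2] at hc1
      have hzx : z ≤ x := by linarith
      have h1 := hlip n x ⟨hx1, hx2⟩ ((1/2:ℝ)^(n+1)) ⟨le_rfl, hstep n⟩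
      rw [← hsdef] at h1
      rw [hm2] at h1
      rw [abs_of_nonneg (by linarith : (0:ℝ) ≤ x - 2*L)] at h1
      rw [abs_of_nonneg (by linarith : (0:ℝ) ≤ x - z), ← hsL]
      by_cases hc2 : L ≤ z
      · -- z in the next dyadic piece
        have h2 := hlip (n+1) ((1/2:ℝ)^(n+1)) ⟨hstep (n+1), le_rfl⟩ z
          ⟨show (1/2:ℝ)^(n+2) ≤ z by rw [← hLdef]; exact hc2,
           show z ≤ (1/2:ℝ)^(n+1) by rw [hm2]; linarith⟩
        have h2s : γ * (2:ℝ)^(n+1+2) = 2 * s := by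
          rw [hsdef, show n+1+2 = (n+2)+1 from rfl, pow_succ]; ring
        rw [h2s] at h2
        rw [hm2] at h2
        rw [abs_of_nonneg (by linarith : (0:ℝ) ≤ 2*L - z)] at h2
        have tri := abs_sub_le (f x) (f (2*L)) (f z)
        have step1 : |f x - f z| ≤ s * (x - 2*L) + 2*s * (2*L - z) := by linarith
        have step2 := mul_le_mul_of_nonneg_right step1 hx0
        have hA : (0:ℝ) ≤ (z - L) * ((x - 2*L) * (6*L - x)) :=
          mul_nonneg (by linarith) (mul_nonneg (by linarith) (by linarith))
        have hB : (0:ℝ) ≤ (2*L - z) * ((x - 2*L) * (4*L - x)) :=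
          mul_nonneg (by linarith) (mul_nonneg (by linarith) (by linarith))
        have hC : (0:ℝ) ≤ L^2 * (2*L - z) := mul_nonneg (by positivity) (by linarith)
        have final : (s * (x - 2*L) + 2*s * (2*L - z)) * x ≤ 6*(s*L)*(x - z) := by
          have scaled : L * ((s * (x - 2*L) + 2*s * (2*L - z)) * x) ≤ L * (6*(s*L)*(x - z)) := by
            linarith [mul_nonneg hs0.le hA, mul_nonneg hs0.le hB, mul_nonneg hs0.le hC]
          exact le_of_mul_le_mul_left scaled hL0
        linarith
      · -- z near zero
        push_neg at hc2
        have hfm : |f (2*L)| = γ := by rw [← hm2]; exact hfpabs (n+1)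
        have hfz : |f z| ≤ γ := hbound z hz0 hz1
        have tri1 := abs_sub_le (f x) (f (2*L)) (f z)
        have tri2 := abs_sub (f (2*L)) (f z)
        have step1 : |f x - f z| ≤ s * (x - 2*L) + 2*(s*L) := by
          linarith [hsL]
        have step2 := mul_le_mul_of_nonneg_right step1 hx0
        have final : (s * (x - 2*L) + 2*(s*L)) * x ≤ 6*(s*L)*(x - z) := by
          have T1 : (0:ℝ) ≤ s * ((x - 2*L) * (4*L - x)) :=
            mul_nonneg hs0.le (mul_nonneg (by linarith) (by linarith))
          have T2 : (0:ℝ) ≤ s * (L * (L - z)) :=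
            mul_nonneg hs0.le (mul_nonneg hL0.le (by linarith))
          have T3 : (0:ℝ) ≤ s * (L * L) := mul_nonneg hs0.le (mul_nonneg hL0.le hL0.le)
          linarith [T1, T2, T3]
        linarith
  -- conclusion
  unfold weakNorm
  refine iSup_le fun t => iSup_le fun ht => ?_
  have hsub : {x ∈ Icc (0:ℝ) 1 | ENNReal.ofReal t ≤ locSlope f x} ⊆ Icc (0:ℝ) (6*γ/t) := by
    rintro x ⟨⟨hx0, hx1⟩, hx⟩
    refine ⟨hx0, ?_⟩
    rcases eq_or_lt_of_le hx0 with h | h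
    · rw [← h]; positivity
    · obtain ⟨n, hn1, hn2⟩ := hmem x h hx1
      have hloc : locSlope f x ≤ ENNReal.ofReal (6*γ/x) := by
        unfold locSlope
        refine iSup_le fun z => iSup_le fun hz => iSup_le fun hne => ?_
        apply ENNReal.ofReal_le_ofReal
        have hxz : 0 < |x - z| := by
          rw [abs_pos, sub_ne_zero]; exact fun hh => hne hh.symm
        rw [div_le_div_iff₀ hxz h]
        exact hkey n x z hn1 hn2 hz.1 hz.2
      have h6 : (0:ℝ) ≤ 6*γ/x := by positivity
      have ht' : t ≤ 6*γ/x := (ENNReal.ofReal_le_ofReal_iff h6).1 (le_trans hx hloc)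
      have h7 : t * x ≤ 6*γ := (le_div_iff₀ h).1 ht'
      rw [le_div_iff₀ ht]
      linarith
  calc ENNReal.ofReal t * volume {x ∈ Icc (0:ℝ) 1 | ENNReal.ofReal t ≤ locSlope f x}
      ≤ ENNReal.ofReal t * volume (Icc (0:ℝ) (6*γ/t)) :=
        mul_le_mul_right (measure_mono hsub) _
    _ = ENNReal.ofReal t * ENNReal.ofReal (6*γ/t) := by rw [Real.volume_Icc, sub_zero]
    _ = ENNReal.ofReal (t * (6*γ/t)) := (ENNReal.ofReal_mul ht.le).symm
    _ = ENNReal.ofReal (6*γ) := by rw [mul_comm, div_mul_cancel₀ _ (ne_of_gt ht)]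
end

section
/- Infinite fat-shattering of the weak class: for every L > 0, every 0 < γ ≤ L/6, and every positive integer m, there exist points x_1, …, x_m ∈ [0,1] and real thresholds r_1, …, r_m such that for every labeling y ∈ {−1,1}^m there exists a function f : [0,1] → ℝ with ‖f‖_w ≤ L and y_i·(f(x_i) − r_i) ≥ γ for all i ∈ {1, …, m}. In fact one may take x_i = 2^{−i} and r_i = 0, so the infinite set {2^{−n} : n ≥ 1} is γ-shattered by {f : ‖f‖_w ≤ L}. -/
open MeasureTheory Set ENNReal

namespace ShatterAux

noncomputable def p (k : ℕ) : ℝ := (1/2 : ℝ) ^ (k + 1)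

lemma p_pos (k : ℕ) : 0 < p k := pow_pos (by norm_num) _

lemma p_succ (k : ℕ) : p (k + 1) = p k / 2 := by
  rw [p, p, pow_succ]; ring

lemma p_le_one (k : ℕ) : p k ≤ 1 := by
  apply pow_le_one₀ <;> norm_num

lemma p_anti {j k : ℕ} (h : j ≤ k) : p k ≤ p j :=
  pow_le_pow_of_le_one (by norm_num) (by norm_num) (by omega)

noncomputable def Pk : ℕ → ℝ
  | 0 => 2
  | (k+1) => p k

noncomputable def Dk : ℕ → ℝ
  | 0 => 3/2
  | (k+1) => p (k+1)

lemma Dk_pos (k : ℕ) : 0 < Dk k := by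
  cases k with
  | zero => norm_num [Dk]
  | succ k => exact p_pos _

noncomputable def H (k : ℕ) (z : ℝ) : ℝ :=
  max (min ((z - p (k+1)) / p (k+1)) ((Pk k - z) / Dk k)) 0

lemma H_nonneg (k : ℕ) (z : ℝ) : 0 ≤ H k z := le_max_right _ _

lemma H_zero_left {k : ℕ} {z : ℝ} (h : z ≤ p (k+1)) : H k z = 0 := by
  apply max_eq_right
  refine le_trans (min_le_left _ _) ?_
  apply div_nonpos_of_nonpos_of_nonneg (by linarith) (p_pos _).le

lemma H_zero_right {k : ℕ} {z : ℝ} (h : p k ≤ z) : H (k+1) z = 0 := by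
  apply max_eq_right
  refine le_trans (min_le_right _ _) ?_
  show (Pk (k+1) - z) / Dk (k+1) ≤ 0
  simp only [Pk, Dk]
  apply div_nonpos_of_nonpos_of_nonneg (by linarith) (p_pos _).le

lemma H_self (k : ℕ) : H k (p k) = 1 := by
  have h1 : (p k - p (k+1)) / p (k+1) = 1 := by
    rw [p_succ]
    have := p_pos k
    field_simp
    ring
  cases k with
  | zero =>
    show max (min ((p 0 - p 1) / p 1) ((2 - p 0) / (3/2))) 0 = 1
    rw [h1]
    norm_num [p]
  | succ j =>
    show max (min ((p (j+1) - p (j+2)) / p (j+2)) ((p j - p (j+1)) / p (j+1))) 0 = 1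
    have h2 : (p j - p (j+1)) / p (j+1) = 1 := by
      rw [p_succ j]
      have := p_pos j
      field_simp
      ring
    rw [h1, h2]
    norm_num

lemma H_left {k : ℕ} {z : ℝ} (h1 : p (k+1) ≤ z) (h2 : z ≤ p k) :
    H k z = (z - p (k+1)) / p (k+1) := by
  have hp1 := p_pos (k+1)
  have hps := p_succ k
  have hle1 : (z - p (k+1)) / p (k+1) ≤ 1 := by
    rw [div_le_one hp1]; linarith
  have hright : 1 ≤ (Pk k - z) / Dk k := by
    cases k with
    | zero =>
      show (1:ℝ) ≤ (2 - z) / (3/2)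
      rw [le_div_iff₀ (by norm_num)]
      have : z ≤ p 0 := h2
      simp only [p] at this
      norm_num at this ⊢
      linarith
    | succ j =>
      show (1:ℝ) ≤ (p j - z) / p (j+1)
      rw [le_div_iff₀ (p_pos _)]
      have h3 := p_succ j
      have h4 := p_succ (j+1)
      have := p_pos j
      linarith
  rw [H, min_eq_left (hle1.trans hright)]
  exact max_eq_left (div_nonneg (by linarith) hp1.le)

lemma H_right {k : ℕ} {z : ℝ} (h1 : p (k+1) ≤ z) (h2 : z ≤ p k) :
    H (k+1) z = (p k - z) / p (k+1) := by
  have hp1 := p_pos (k+1)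
  have hp2 := p_pos (k+2)
  have hps := p_succ k
  have hps1 := p_succ (k+1)
  have hr1 : (p k - z) / p (k+1) ≤ 1 := by
    rw [div_le_one hp1]; linarith
  have hl : 1 ≤ (z - p (k+2)) / p (k+2) := by
    rw [le_div_iff₀ hp2]; linarith
  show max (min ((z - p (k+2)) / p (k+2)) ((Pk (k+1) - z) / Dk (k+1))) 0 = _
  simp only [Pk, Dk]
  rw [min_eq_right (hr1.trans hl)]
  exact max_eq_left (div_nonneg (by linarith) hp1.le)

lemma H_top {z : ℝ} (h1 : p 0 ≤ z) (h2 : z ≤ 1) : H 0 z = (2 - z) / (3/2) := by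
  have hz : (1/2 : ℝ) ≤ z := by simpa [p] using h1
  have hp1 : p 1 = (1/4 : ℝ) := by norm_num [p]
  show max (min ((z - p 1) / p 1) ((2 - z) / (3/2))) 0 = (2 - z) / (3/2)
  rw [hp1]
  have hl : (1:ℝ) ≤ (z - 1/4) / (1/4) := by rw [le_div_iff₀ (by norm_num)]; linarith
  have hr : (2 - z) / (3/2 : ℝ) ≤ 1 := by rw [div_le_one (by norm_num)]; linarith
  rw [min_eq_right (hr.trans hl)]
  exact max_eq_left (div_nonneg (by linarith) (by norm_num))


noncomputable def F (g : ℝ) (m : ℕ) (Y : ℕ → ℝ) (z : ℝ) : ℝ :=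
  g * ∑ j ∈ Finset.range (m+1), Y j * H j z

variable {g : ℝ} {m : ℕ} {Y : ℕ → ℝ}

lemma F_vanish (hY0 : ∀ j, m ≤ j → Y j = 0) {z : ℝ} (hz : z ≤ p m) :
    F g m Y z = 0 := by
  rw [F, Finset.sum_eq_zero, mul_zero]
  intro j hj
  rw [Finset.mem_range] at hj
  by_cases hjm : j < m
  · rw [H_zero_left (le_trans hz (p_anti (by omega))), mul_zero]
  · have hj' : j = m := by omega
    rw [hj', hY0 m le_rfl, zero_mul]

lemma F_extract {k : ℕ} (hk : k < m) {z : ℝ} (h1 : p (k+1) ≤ z) (h2 : z ≤ p k) :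
    F g m Y z = g * (Y k * H k z + Y (k+1) * H (k+1) z) := by
  rw [F]
  congr 1
  rw [← Finset.sum_pair (f := fun j => Y j * H j z) (show k ≠ k+1 by omega)]
  refine (Finset.sum_subset ?_ ?_).symm
  · intro j hj
    simp only [Finset.mem_insert, Finset.mem_singleton] at hj
    rw [Finset.mem_range]
    omega
  · intro j hjt hjs
    simp only [Finset.mem_insert, Finset.mem_singleton, not_or] at hjs
    rw [Finset.mem_range] at hjt
    rcases Nat.lt_or_ge j k with hlt | hge
    · rw [H_zero_left (le_trans h2 (p_anti (by omega))), mul_zero]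
    · have hgt : k + 1 < j := by omega
      obtain ⟨i, rfl⟩ : ∃ i, j = i + 1 := ⟨j - 1, by omega⟩
      rw [H_zero_right (le_trans (p_anti (by omega)) h1), mul_zero]

lemma F_extract_top {z : ℝ} (h1 : p 0 ≤ z) :
    F g m Y z = g * (Y 0 * H 0 z) := by
  rw [F]
  congr 1
  apply Finset.sum_eq_single_of_mem 0 (by simp)
  intro j _ hj
  obtain ⟨i, rfl⟩ : ∃ i, j = i + 1 := ⟨j - 1, by omega⟩
  rw [H_zero_right (le_trans (p_anti (by omega)) h1), mul_zero]

lemma F_interval (hg : 0 ≤ g) (hY : ∀ j, |Y j| ≤ 1) (hY0 : ∀ j, m ≤ j → Y j = 0)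
    (k : ℕ) {a b : ℝ} (ha : p (k+1) ≤ a) (hab : a ≤ b) (hb : b ≤ p k) :
    |F g m Y a - F g m Y b| ≤ 4 * g * (b - a) / p k := by
  have hpk := p_pos k
  have hp1 := p_pos (k+1)
  have hps := p_succ k
  rcases lt_or_ge k m with hk | hk
  · rw [F_extract hk ha (hab.trans hb), F_extract hk (ha.trans hab) hb,
        H_left ha (hab.trans hb), H_right ha (hab.trans hb),
        H_left (ha.trans hab) hb, H_right (ha.trans hab) hb]
    have hE : g * (Y k * ((a - p (k+1)) / p (k+1)) + Y (k+1) * ((p k - a) / p (k+1)))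
        - g * (Y k * ((b - p (k+1)) / p (k+1)) + Y (k+1) * ((p k - b) / p (k+1)))
        = g * ((Y k - Y (k+1)) * ((a - b) / p (k+1))) := by
      field_simp
      ring
    rw [hE, abs_mul, abs_mul, abs_of_nonneg hg, abs_div, abs_of_pos hp1]
    have h1 : |Y k - Y (k+1)| ≤ 2 := by
      have := abs_sub (Y k) (Y (k+1))
      have h2 := hY k
      have h3 := hY (k+1)
      linarith
    have h2 : |a - b| = b - a := by rw [abs_sub_comm, abs_of_nonneg (by linarith)]
    rw [h2]
    have key : g * (|Y k - Y (k+1)| * ((b - a) / p (k+1))) ≤ g * (2 * ((b - a) / p (k+1))) := by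
      apply mul_le_mul_of_nonneg_left _ hg
      apply mul_le_mul_of_nonneg_right h1 (div_nonneg (by linarith) hp1.le)
    refine key.trans (le_of_eq ?_)
    rw [hps]
    field_simp
    ring
  · rw [F_vanish hY0 (le_trans (hab.trans hb) (p_anti hk)),
        F_vanish hY0 (le_trans hb (p_anti hk))]
    simp only [sub_zero, abs_zero]
    apply div_nonneg _ hpk.le
    have : 0 ≤ 4 * g := by linarith
    nlinarith

lemma F_top (hg : 0 ≤ g) (hY : ∀ j, |Y j| ≤ 1)
    {a b : ℝ} (ha : p 0 ≤ a) (hab : a ≤ b) (hb : b ≤ 1) :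
    |F g m Y a - F g m Y b| ≤ g * (b - a) := by
  rw [F_extract_top ha, F_extract_top (ha.trans hab),
      H_top ha (hab.trans hb), H_top (ha.trans hab) hb]
  have hE : g * (Y 0 * ((2 - a) / (3/2))) - g * (Y 0 * ((2 - b) / (3/2)))
      = g * (Y 0 * ((b - a) * (2/3))) := by ring
  rw [hE, abs_mul, abs_mul, abs_of_nonneg hg]
  have h1 := hY 0
  have h2 : |(b - a) * (2/3 : ℝ)| = (b - a) * (2/3) := abs_of_nonneg (by linarith)
  rw [h2]
  have h3 : |Y 0| * ((b - a) * (2/3)) ≤ b - a := by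
    nlinarith [abs_nonneg (Y 0), mul_nonneg (sub_nonneg.2 h1) (sub_nonneg.2 hab)]
  exact mul_le_mul_of_nonneg_left h3 hg

lemma F_bound_aux (hg : 0 ≤ g) (hY : ∀ j, |Y j| ≤ 1) (hY0 : ∀ j, m ≤ j → Y j = 0) :
    ∀ n : ℕ, ∀ z : ℝ, p n ≤ z → z ≤ 1 → |F g m Y z| ≤ g := by
  intro n
  induction n with
  | zero =>
    intro z hz h1
    rw [F_extract_top hz, H_top hz h1]
    have hz2 : (1/2 : ℝ) ≤ z := by simpa [p] using hz
    have hq : |(2 - z) / (3/2 : ℝ)| ≤ 1 := by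
      rw [abs_le]
      constructor <;> [rw [le_div_iff₀ (by norm_num)]; rw [div_le_one (by norm_num)]] <;> linarith
    calc |g * (Y 0 * ((2 - z) / (3/2)))| = g * (|Y 0| * |(2 - z) / (3/2)|) := by
          rw [abs_mul, abs_mul, abs_of_nonneg hg]
      _ ≤ g * (1 * 1) := by
          apply mul_le_mul_of_nonneg_left _ hg
          apply mul_le_mul (hY 0) hq (abs_nonneg _) (by norm_num)
      _ = g := by ring
  | succ n ih =>
    intro z hz h1
    rcases le_or_gt (p n) z with h | h
    · exact ih z h h1
    rcases lt_or_ge n m with hnm | hnm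
    · rw [F_extract hnm hz h.le, H_left hz h.le, H_right hz h.le]
      have hp1 := p_pos (n+1)
      have hps := p_succ n
      have hA : 0 ≤ (z - p (n+1)) / p (n+1) := div_nonneg (by linarith) hp1.le
      have hB : 0 ≤ (p n - z) / p (n+1) := div_nonneg (by linarith) hp1.le
      have hsum : (z - p (n+1)) / p (n+1) + (p n - z) / p (n+1) = 1 := by
        have he : z - p (n+1) + (p n - z) = p (n+1) := by rw [hps]; ring
        rw [← add_div, he, div_self hp1.ne']
      calc |g * (Y n * ((z - p (n+1)) / p (n+1)) + Y (n+1) * ((p n - z) / p (n+1)))|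
          = g * |Y n * ((z - p (n+1)) / p (n+1)) + Y (n+1) * ((p n - z) / p (n+1))| := by
            rw [abs_mul, abs_of_nonneg hg]
        _ ≤ g * (|Y n| * ((z - p (n+1)) / p (n+1)) + |Y (n+1)| * ((p n - z) / p (n+1))) := by
            apply mul_le_mul_of_nonneg_left _ hg
            refine (abs_add_le _ _).trans ?_
            rw [abs_mul, abs_mul, abs_of_nonneg hA, abs_of_nonneg hB]
        _ ≤ g * (1 * ((z - p (n+1)) / p (n+1)) + 1 * ((p n - z) / p (n+1))) := by
            apply mul_le_mul_of_nonneg_left _ hg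
            have := mul_le_mul_of_nonneg_right (hY n) hA
            have := mul_le_mul_of_nonneg_right (hY (n+1)) hB
            linarith
        _ = g := by rw [one_mul, one_mul, hsum, mul_one]
    · rw [F_vanish hY0 (h.le.trans (p_anti hnm))]
      simpa using hg

lemma F_bound (hg : 0 ≤ g) (hY : ∀ j, |Y j| ≤ 1) (hY0 : ∀ j, m ≤ j → Y j = 0)
    {z : ℝ} (h0 : 0 ≤ z) (h1 : z ≤ 1) : |F g m Y z| ≤ g := by
  rcases le_or_gt z (p m) with h | h
  · rw [F_vanish hY0 h]; simpa using hg
  · exact F_bound_aux hg hY hY0 m z h.le h1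

lemma F_chord_aux (hg : 0 ≤ g) (hY : ∀ j, |Y j| ≤ 1) (hY0 : ∀ j, m ≤ j → Y j = 0) :
    ∀ n : ℕ, ∀ a b : ℝ, p n ≤ a → a ≤ b → b ≤ 1 →
      |F g m Y a - F g m Y b| ≤ 4 * g * (b - a) / a := by
  intro n
  induction n with
  | zero =>
    intro a b ha hab hb
    have ha0 : 0 < a := lt_of_lt_of_le (p_pos 0) ha
    have ha1 : a ≤ 1 := hab.trans hb
    refine (F_top hg hY ha hab hb).trans ?_
    rw [le_div_iff₀ ha0]
    nlinarith [mul_nonneg (mul_nonneg hg (sub_nonneg.2 hab)) (by linarith : (0:ℝ) ≤ 4 - a)]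
  | succ n ih =>
    intro a b ha hab hb
    rcases le_or_gt (p n) a with h | h
    · exact ih a b h hab hb
    have ha0 : 0 < a := lt_of_lt_of_le (p_pos _) ha
    have hnum : 0 ≤ 4 * g * (b - a) := by nlinarith [sub_nonneg.2 hab]
    rcases le_or_gt b (p n) with hbn | hbn
    · refine (F_interval hg hY hY0 n ha hab hbn).trans ?_
      exact div_le_div_of_nonneg_left hnum ha0 h.le
    · have h1 := F_interval hg hY hY0 n ha h.le le_rfl
      have h2 := ih (p n) b le_rfl hbn.le hb
      have hpn := p_pos n
      calc |F g m Y a - F g m Y b|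
          ≤ |F g m Y a - F g m Y (p n)| + |F g m Y (p n) - F g m Y b| := abs_sub_le _ _ _
        _ ≤ 4 * g * (p n - a) / p n + 4 * g * (b - p n) / p n := add_le_add h1 h2
        _ ≤ 4 * g * (p n - a) / a + 4 * g * (b - p n) / a := by
            have k1 : 0 ≤ 4 * g * (p n - a) := by nlinarith [sub_nonneg.2 h.le]
            have k2 : 0 ≤ 4 * g * (b - p n) := by nlinarith [sub_nonneg.2 hbn.le]
            exact add_le_add (div_le_div_of_nonneg_left k1 ha0 h.le)
              (div_le_div_of_nonneg_left k2 ha0 h.le)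
        _ = 4 * g * (b - a) / a := by rw [← add_div]; congr 1; ring

lemma F_chord (hg : 0 ≤ g) (hY : ∀ j, |Y j| ≤ 1) (hY0 : ∀ j, m ≤ j → Y j = 0)
    {a b : ℝ} (ha : 0 < a) (hab : a ≤ b) (hb : b ≤ 1) :
    |F g m Y a - F g m Y b| ≤ 4 * g * (b - a) / a := by
  have hnum : 0 ≤ 4 * g * (b - a) := by nlinarith [sub_nonneg.2 hab]
  rcases le_or_gt (p m) a with h | h
  · exact F_chord_aux hg hY hY0 m a b h hab hb
  rcases le_or_gt b (p m) with h2 | h2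
  · rw [F_vanish hY0 h.le, F_vanish hY0 h2]
    simpa using div_nonneg hnum ha.le
  · have hFa : F g m Y a = 0 := F_vanish hY0 h.le
    have hFm : F g m Y (p m) = 0 := F_vanish hY0 le_rfl
    have h3 := F_chord_aux hg hY hY0 m (p m) b le_rfl h2.le hb
    rw [hFm] at h3
    rw [hFa]
    refine h3.trans ?_
    apply div_le_div₀ hnum _ ha h.le
    nlinarith [sub_nonneg.2 h.le]

lemma F_slope (hg : 0 ≤ g) (hY : ∀ j, |Y j| ≤ 1) (hY0 : ∀ j, m ≤ j → Y j = 0)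
    {x x' : ℝ} (hx0 : 0 < x) (hx1 : x ≤ 1) (hx'0 : 0 ≤ x') (hx'1 : x' ≤ 1) :
    |F g m Y x - F g m Y x'| ≤ 6 * g * |x - x'| / x := by
  rcases le_or_gt (x/3) |x - x'| with h | h
  · have b1 := F_bound hg hY hY0 hx0.le hx1
    have b2 := F_bound hg hY hY0 hx'0 hx'1
    have h3 : |F g m Y x - F g m Y x'| ≤ 2 * g := by
      have := abs_sub (F g m Y x) (F g m Y x')
      linarith
    refine h3.trans ?_
    rw [le_div_iff₀ hx0]
    nlinarith
  · rcases le_total x x' with hxx | hxx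
    · have hc := F_chord hg hY hY0 hx0 hxx hx'1
      have habs : |x - x'| = x' - x := by rw [abs_sub_comm, abs_of_nonneg (by linarith)]
      rw [habs]
      refine hc.trans ?_
      have k1 : 0 ≤ g * (x' - x) := mul_nonneg hg (by linarith)
      exact div_le_div₀ (by nlinarith) (by nlinarith) hx0 le_rfl
    · have hd : x - x' < x / 3 := lt_of_le_of_lt (le_abs_self _) h
      have hx'pos : 0 < x' := by linarith
      have hc := F_chord hg hY hY0 hx'pos hxx hx1
      rw [abs_sub_comm]
      refine hc.trans ?_
      have habs : |x - x'| = x - x' := abs_of_nonneg (by linarith)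
      rw [habs, div_le_div_iff₀ hx'pos hx0]
      have k1 : 0 ≤ g * (x - x') := mul_nonneg hg (by linarith)
      have k2 : (0:ℝ) ≤ 3 * x' - 2 * x := by linarith
      nlinarith [mul_nonneg k1 k2]

lemma F_value (hk : ∀ j, m ≤ j → Y j = 0) {i : ℕ} (him : i < m) :
    F g m Y (p i) = g * Y i := by
  rw [F_extract him (p_anti (by omega)) le_rfl, H_self, H_zero_right le_rfl]
  ring

end ShatterAux

/-- Infinite fat-shattering of the weak class: for every `L > 0`, `0 < γ ≤ L/6` and `m`,
the points `x_i = 2^{−i}` with thresholds `r_i = 0` are `γ`-shattered by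
`{f : ‖f‖_w ≤ L}`. -/
theorem weak_class_fat_shattering (L : ℝ) (hL : 0 < L) (γ : ℝ) (hγ : 0 < γ)
    (hγL : γ ≤ L / 6) (m : ℕ) (hm : 0 < m) :
    ∃ x r : Fin m → ℝ,
      (∀ i, x i ∈ Set.Icc (0:ℝ) 1) ∧
      (∀ i, x i = (1 / 2 : ℝ) ^ ((i : ℕ) + 1)) ∧ (∀ i, r i = 0) ∧
      ∀ y : Fin m → ℝ, (∀ i, y i = 1 ∨ y i = -1) →
        ∃ f : ℝ → ℝ, weakNorm f ≤ ENNReal.ofReal L ∧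
          ∀ i, γ ≤ y i * (f (x i) - r i) := by
  refine ⟨fun i => ShatterAux.p i, fun _ => 0, ?_, ?_, fun _ => rfl, ?_⟩
  · exact fun i => ⟨(ShatterAux.p_pos i).le, ShatterAux.p_le_one i⟩
  · intro i; rfl
  intro y hy
  set Y : ℕ → ℝ := fun j => if h : j < m then y ⟨j, h⟩ else 0 with hYdef
  have hY : ∀ j, |Y j| ≤ 1 := by
    intro j
    simp only [hYdef]
    split
    · rcases hy ⟨j, by assumption⟩ with h | h <;> rw [h] <;> norm_num
    · norm_num
  have hY0 : ∀ j, m ≤ j → Y j = 0 := by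
    intro j hj
    simp only [hYdef]
    rw [dif_neg (by omega)]
  set f : ℝ → ℝ := ShatterAux.F γ m Y with hfdef
  refine ⟨f, ?_, ?_⟩
  · -- weak norm bound
    rw [weakNorm]
    refine iSup_le fun t => iSup_le fun ht => ?_
    have hsub : {x ∈ Set.Icc (0:ℝ) 1 | ENNReal.ofReal t ≤ locSlope f x}
        ⊆ Set.Icc 0 (6 * γ / t) := by
      rintro x ⟨hx, hsl⟩
      refine ⟨hx.1, ?_⟩
      by_contra hc
      push_neg at hc
      have h6γt : 0 ≤ 6 * γ / t := by positivity
      have hx0 : 0 < x := lt_of_le_of_lt h6γt hc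
      have hΛ : locSlope f x ≤ ENNReal.ofReal (6 * γ / x) := by
        rw [locSlope]
        refine iSup_le fun x' => iSup_le fun hx' => iSup_le fun hne => ?_
        apply ENNReal.ofReal_le_ofReal
        have habs : 0 < |x - x'| := abs_pos.2 (sub_ne_zero.2 (Ne.symm hne))
        rw [div_le_div_iff₀ habs hx0]
        have hs := ShatterAux.F_slope (g := γ) (m := m) (Y := Y) hγ.le hY hY0
          hx0 hx.2 hx'.1 hx'.2
        have := (le_div_iff₀ hx0).1 hs
        linarith
      have h1 : ENNReal.ofReal t ≤ ENNReal.ofReal (6 * γ / x) := hsl.trans hΛ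
      rw [ENNReal.ofReal_le_ofReal_iff (by positivity)] at h1
      have h2 : t * x ≤ 6 * γ := (le_div_iff₀ hx0).1 h1
      have h3 : 6 * γ < t * x := by
        have := (div_lt_iff₀ ht).1 hc
        linarith
      linarith
    calc ENNReal.ofReal t * volume {x ∈ Set.Icc (0:ℝ) 1 | ENNReal.ofReal t ≤ locSlope f x}
        ≤ ENNReal.ofReal t * volume (Set.Icc (0:ℝ) (6 * γ / t)) := by
          exact mul_le_mul_right (measure_mono hsub) _
      _ = ENNReal.ofReal t * ENNReal.ofReal (6 * γ / t) := by
          rw [Real.volume_Icc, sub_zero]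
      _ = ENNReal.ofReal (t * (6 * γ / t)) := (ENNReal.ofReal_mul ht.le).symm
      _ = ENNReal.ofReal (6 * γ) := by
          rw [mul_comm, div_mul_cancel₀ _ ht.ne']
      _ ≤ ENNReal.ofReal L := ENNReal.ofReal_le_ofReal (by linarith)
  · -- values
    intro i
    have hval : f (ShatterAux.p i) = γ * Y i :=
      ShatterAux.F_value hY0 i.isLt
    have hYi : Y (i : ℕ) = y i := by
      simp only [hYdef]
      rw [dif_pos i.isLt]
    rw [hval, hYi, sub_zero]
    rcases hy i with h | h <;> rw [h] <;> ring_nf <;> linarith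
end
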